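/- arXiv:2111.15410 — 3 statements merged into one kernel-verified Lean document; each statement's English description precedes it below -/
import Mathlib

section
/- For any subset S ⊆ ℝ^m, the lower Minkowski dimension of S with respect to the quasi-metric induced by the r-quasinorm satisfies dim_r(S) ≥ 1 − r_1(m − dim_H S). -/
open Filter Topology

/-- Maximal cardinality of a `δ`-separated subset of `S` with respect to a quasi-metric `d`. -/
noncomputable def maxSepCard {α : Type*} (d : α → α → ℝ) (δ : ℝ) (S : Set α) : ℕ :=
  sSup {N : ℕ | ∃ F : Finset α, ↑F ⊆ S ∧
    (∀ x ∈ F, ∀ y ∈ F, x ≠ y → δ ≤ d x y) ∧ F.card = N}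

/-- Lower Minkowski dimension of `S` with respect to a quasi-metric `d`:
`liminf_{δ→0⁺} log N_δ / log(1/δ)` over bounded subsets. -/
noncomputable def lowerMinkDim {α : Type*} (d : α → α → ℝ) (S : Set α) : ℝ :=
  ⨆ B : {B : Set α // B ⊆ S ∧ ∃ C : ℝ, ∀ x ∈ B, ∀ y ∈ B, d x y ≤ C},
    Filter.liminf
      (fun δ : ℝ => Real.log ((maxSepCard d δ B.1 : ℕ) : ℝ) / Real.log (1 / δ))
      (nhdsWithin 0 (Set.Ioi 0))

open MeasureTheory Set ENNReal NNReal

variable {m : ℕ}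

private noncomputable def DD (hne : (Finset.univ : Finset (Fin m)).Nonempty)
    (r : Fin m → ℝ) (x y : Fin m → ℝ) : ℝ :=
  Finset.univ.sup' hne (fun i => |x i - y i| ^ (r i)⁻¹)

variable {hne : (Finset.univ : Finset (Fin m)).Nonempty} {r : Fin m → ℝ}

private lemma term_lt_iff {a δ : ℝ} (ha : 0 ≤ a) (hδ : 0 < δ) {ri : ℝ} (hri : 0 < ri) :
    a ^ ri⁻¹ < δ ↔ a < δ ^ ri := by
  rw [← Real.rpow_lt_rpow_iff (Real.rpow_nonneg ha _) hδ.le hri,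
    Real.rpow_inv_rpow ha hri.ne']

private lemma term_le_iff {a δ : ℝ} (ha : 0 ≤ a) (hδ : 0 < δ) {ri : ℝ} (hri : 0 < ri) :
    a ^ ri⁻¹ ≤ δ ↔ a ≤ δ ^ ri := by
  rw [← Real.rpow_le_rpow_iff (Real.rpow_nonneg ha _) hδ.le hri,
    Real.rpow_inv_rpow ha hri.ne']

private lemma DD_lt_iff (hrpos : ∀ i, 0 < r i) {x y : Fin m → ℝ} {δ : ℝ} (hδ : 0 < δ) :
    DD hne r x y < δ ↔ ∀ i, |x i - y i| < δ ^ r i := by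
  rw [DD, Finset.sup'_lt_iff]
  exact forall_congr' fun i => by
    rw [forall_prop_of_true (Finset.mem_univ i), term_lt_iff (abs_nonneg _) hδ (hrpos i)]

private lemma DD_le_iff (hrpos : ∀ i, 0 < r i) {x y : Fin m → ℝ} {δ : ℝ} (hδ : 0 < δ) :
    DD hne r x y ≤ δ ↔ ∀ i, |x i - y i| ≤ δ ^ r i := by
  rw [DD, Finset.sup'_le_iff]
  exact forall_congr' fun i => by
    rw [forall_prop_of_true (Finset.mem_univ i), term_le_iff (abs_nonneg _) hδ (hrpos i)]

private lemma le_DD_iff (hrpos : ∀ i, 0 < r i) {x y : Fin m → ℝ} {δ : ℝ} (hδ : 0 < δ) :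
    δ ≤ DD hne r x y ↔ ∃ i, δ ^ r i ≤ |x i - y i| := by
  rw [DD, Finset.le_sup'_iff]
  refine exists_congr fun i => ?_
  rw [and_iff_right (Finset.mem_univ i)]
  rw [← not_iff_not, not_le, not_le, term_lt_iff (abs_nonneg _) hδ (hrpos i)]

private lemma DD_symm (x y : Fin m → ℝ) : DD hne r x y = DD hne r y x :=
  Finset.sup'_congr _ rfl fun i _ => by rw [abs_sub_comm]

private lemma DD_self (hrpos : ∀ i, 0 < r i) (x : Fin m → ℝ) : DD hne r x x = 0 := by
  rw [DD]
  have : ∀ i ∈ Finset.univ, |x i - x i| ^ (r i)⁻¹ = (fun _ : Fin m => (0:ℝ)) i := fun i _ => by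
    simp [Real.zero_rpow (inv_ne_zero (hrpos i).ne')]
  rw [Finset.sup'_congr _ rfl this, Finset.sup'_const]

private lemma packing (hrpos : ∀ i, 0 < r i) (hrsum : ∑ i, r i = 1)
    {δ C : ℝ} (hδ : 0 < δ) (hδ1 : δ ≤ 1) (hC : 1 ≤ C)
    {F : Finset (Fin m → ℝ)}
    (hsep : ∀ x ∈ F, ∀ y ∈ F, x ≠ y → δ ≤ DD hne r x y)
    (hbd : ∀ x ∈ F, ∀ y ∈ F, DD hne r x y ≤ C) :
    (F.card : ℝ) * δ ≤ 4 ^ m * C := by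
  have hC0 : (0:ℝ) < C := lt_of_lt_of_le one_pos hC
  rcases F.eq_empty_or_nonempty with hF | ⟨x0, hx0⟩
  · simp [hF]; positivity
  set box : (Fin m → ℝ) → Set (Fin m → ℝ) := fun x =>
    Set.pi Set.univ (fun i => Ioo (x i - δ ^ r i / 2) (x i + δ ^ r i / 2)) with hbox
  have hvol : ∀ x, volume (box x) = ENNReal.ofReal δ := by
    intro x
    rw [hbox, volume_pi_pi]
    have : ∀ i, volume (Ioo (x i - δ ^ r i / 2) (x i + δ ^ r i / 2))
        = ENNReal.ofReal (δ ^ r i) := by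
      intro i; rw [Real.volume_Ioo]; ring_nf
    rw [Finset.prod_congr rfl (fun i _ => this i),
      ← ENNReal.ofReal_prod_of_nonneg (fun i _ => Real.rpow_nonneg hδ.le _),
      ← Real.rpow_sum_of_pos hδ, hrsum, Real.rpow_one]
  have hdisj : (↑F : Set (Fin m → ℝ)).PairwiseDisjoint box := by
    intro x hx y hy hxy
    obtain ⟨i, hi⟩ := (le_DD_iff hrpos hδ).1 (hsep x hx y hy hxy)
    show Disjoint (box x) (box y)
    rw [Set.disjoint_left]
    rintro z hzx hzy
    have h1 := hzx i (Set.mem_univ i)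
    have h2 := hzy i (Set.mem_univ i)
    simp only [Set.mem_Ioo] at h1 h2
    have e1 : |x i - z i| < δ ^ r i / 2 := abs_sub_lt_iff.2 ⟨by linarith, by linarith⟩
    have e2 : |z i - y i| < δ ^ r i / 2 := abs_sub_lt_iff.2 ⟨by linarith, by linarith⟩
    have := abs_sub_le (x i) (z i) (y i)
    have := abs_sub_lt_iff.1 e1
    linarith [hi]
  have hone : ∀ i, δ ^ r i ≤ 1 := fun i => Real.rpow_le_one hδ.le hδ1 (hrpos i).le
  have hCone : ∀ i, (1:ℝ) ≤ C ^ r i := fun i => Real.one_le_rpow hC (hrpos i).le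
  set Big : Set (Fin m → ℝ) :=
    Set.pi Set.univ (fun i => Icc (x0 i - C ^ r i - 1) (x0 i + C ^ r i + 1)) with hBig
  have hsub : ∀ x ∈ F, box x ⊆ Big := by
    intro x hx z hz i _
    have h1 := hz i (Set.mem_univ i)
    simp only [Set.mem_Ioo] at h1
    have h2 : |x i - x0 i| ≤ C ^ r i := (DD_le_iff hrpos hC0).1 (hbd x hx x0 hx0) i
    have h2' := abs_sub_le_iff.1 h2
    have hi := hone i
    constructor <;> nlinarith [h1.1, h1.2, h2'.1, h2'.2]
  have hmeas : ∀ x : Fin m → ℝ, MeasurableSet (box x) := fun x =>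
    MeasurableSet.univ_pi (fun i => measurableSet_Ioo)
  have key : (F.card : ℝ≥0∞) * ENNReal.ofReal δ ≤ ENNReal.ofReal (4 ^ m * C) := by
    calc (F.card : ℝ≥0∞) * ENNReal.ofReal δ
        = ∑ x ∈ F, volume (box x) := by
          rw [Finset.sum_congr rfl (fun x _ => hvol x), Finset.sum_const, nsmul_eq_mul]
      _ = volume (⋃ x ∈ F, box x) :=
          (measure_biUnion_finset hdisj (fun x _ => hmeas x)).symm
      _ ≤ volume Big := measure_mono (Set.iUnion₂_subset hsub)
      _ ≤ ENNReal.ofReal (4 ^ m * C) := by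
          rw [hBig, volume_pi_pi]
          have : ∀ i, volume (Icc (x0 i - C ^ r i - 1) (x0 i + C ^ r i + 1))
              ≤ ENNReal.ofReal (4 * C ^ r i) := by
            intro i
            rw [Real.volume_Icc]
            apply ENNReal.ofReal_le_ofReal
            nlinarith [hCone i]
          calc ∏ i, volume (Icc (x0 i - C ^ r i - 1) (x0 i + C ^ r i + 1))
              ≤ ∏ i : Fin m, ENNReal.ofReal (4 * C ^ r i) :=
                Finset.prod_le_prod' (fun i _ => this i)
            _ = ENNReal.ofReal (4 ^ m * C) := by
                rw [← ENNReal.ofReal_prod_of_nonneg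
                  (fun i _ => by positivity)]
                congr 1
                rw [Finset.prod_mul_distrib, Finset.prod_const, ← Real.rpow_sum_of_pos hC0,
                  hrsum, Real.rpow_one, Finset.card_univ, Fintype.card_fin]
  have : ENNReal.ofReal ((F.card : ℝ) * δ) ≤ ENNReal.ofReal (4 ^ m * C) := by
    rwa [ENNReal.ofReal_mul (by positivity), ENNReal.ofReal_natCast]
  exact (ENNReal.ofReal_le_ofReal_iff (by positivity)).1 this

private lemma sep_bddAbove (hrpos : ∀ i, 0 < r i) (hrsum : ∑ i, r i = 1)
    {B : Set (Fin m → ℝ)} {C δ : ℝ}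
    (hδ : 0 < δ) (hδ1 : δ ≤ 1) (hC : 1 ≤ C)
    (hCB : ∀ x ∈ B, ∀ y ∈ B, DD hne r x y ≤ C) :
    BddAbove {N : ℕ | ∃ F : Finset (Fin m → ℝ), ↑F ⊆ B ∧
      (∀ x ∈ F, ∀ y ∈ F, x ≠ y → δ ≤ DD hne r x y) ∧ F.card = N} := by
  refine ⟨⌈4 ^ m * C / δ⌉₊, ?_⟩
  rintro N ⟨F, hFB, hsep, rfl⟩
  have hbd : ∀ x ∈ F, ∀ y ∈ F, DD hne r x y ≤ C := fun x hx y hy =>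
    hCB x (hFB hx) y (hFB hy)
  have h := packing hrpos hrsum hδ hδ1 hC hsep hbd
  have h2 : (F.card : ℝ) ≤ 4 ^ m * C / δ := by
    rw [le_div_iff₀ hδ]; exact h
  exact_mod_cast h2.trans (Nat.le_ceil _)

private lemma maxSepCard_le (hrpos : ∀ i, 0 < r i) (hrsum : ∑ i, r i = 1)
    {B : Set (Fin m → ℝ)} {C δ : ℝ}
    (hδ : 0 < δ) (hδ1 : δ ≤ 1) (hC : 1 ≤ C)
    (hCB : ∀ x ∈ B, ∀ y ∈ B, DD hne r x y ≤ C) :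
    (maxSepCard (DD hne r) δ B : ℝ) * δ ≤ 4 ^ m * C := by
  have hbdd := sep_bddAbove hrpos hrsum hδ hδ1 hC hCB
  rcases Set.eq_empty_or_nonempty {N : ℕ | ∃ F : Finset (Fin m → ℝ), ↑F ⊆ B ∧
      (∀ x ∈ F, ∀ y ∈ F, x ≠ y → δ ≤ DD hne r x y) ∧ F.card = N} with h | h
  · rw [maxSepCard, h]
    simp [csSup_empty]
    positivity
  · obtain ⟨F, hFB, hsep, hcard⟩ := Nat.sSup_mem h hbdd
    rw [maxSepCard, ← hcard]
    exact packing hrpos hrsum hδ hδ1 hC hsep (fun x hx y hy => hCB x (hFB hx) y (hFB hy))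

private lemma exists_maximal_sep (hrpos : ∀ i, 0 < r i) (hrsum : ∑ i, r i = 1)
    {B : Set (Fin m → ℝ)} {C δ : ℝ}
    (hδ : 0 < δ) (hδ1 : δ ≤ 1) (hC : 1 ≤ C)
    (hCB : ∀ x ∈ B, ∀ y ∈ B, DD hne r x y ≤ C) :
    ∃ F : Finset (Fin m → ℝ), ↑F ⊆ B ∧
      (∀ x ∈ F, ∀ y ∈ F, x ≠ y → δ ≤ DD hne r x y) ∧
      F.card = maxSepCard (DD hne r) δ B ∧
      ∀ z ∈ B, ∃ x ∈ F, DD hne r z x < δ := by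
  have hbdd := sep_bddAbove hrpos hrsum hδ hδ1 hC hCB
  have hmem : 0 ∈ {N : ℕ | ∃ F : Finset (Fin m → ℝ), ↑F ⊆ B ∧
      (∀ x ∈ F, ∀ y ∈ F, x ≠ y → δ ≤ DD hne r x y) ∧ F.card = N} :=
    ⟨∅, by simp⟩
  obtain ⟨F, hFB, hsep, hcard⟩ := Nat.sSup_mem ⟨0, hmem⟩ hbdd
  refine ⟨F, hFB, hsep, hcard, ?_⟩
  intro z hz
  by_contra hnot
  push_neg at hnot
  have hzF : z ∉ F := by
    intro hzF
    have := hnot z hzF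
    rw [DD_self hrpos] at this
    exact absurd hδ (not_lt.2 this)
  have hmem' : F.card + 1 ∈ {N : ℕ | ∃ F : Finset (Fin m → ℝ), ↑F ⊆ B ∧
      (∀ x ∈ F, ∀ y ∈ F, x ≠ y → δ ≤ DD hne r x y) ∧ F.card = N} := by
    refine ⟨insert z F, ?_, ?_, Finset.card_insert_of_notMem hzF⟩
    · intro x hx
      rcases Finset.mem_coe.1 hx |> Finset.mem_insert.1 with rfl | hx'
      · exact hz
      · exact hFB hx'
    · intro x hx y hy hxy
      rcases Finset.mem_insert.1 hx with rfl | hx' <;>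
        rcases Finset.mem_insert.1 hy with rfl | hy'
      · exact absurd rfl hxy
      · exact hnot y hy'
      · rw [DD_symm]; exact hnot x hx'
      · exact hsep x hx' y hy' hxy
  exact absurd (le_csSup hbdd hmem' : F.card + 1 ≤ maxSepCard (DD hne r) δ B)
    (by omega)

private lemma one_le_maxSepCard (hrpos : ∀ i, 0 < r i) (hrsum : ∑ i, r i = 1)
    {B : Set (Fin m → ℝ)} {C δ : ℝ}
    (hδ : 0 < δ) (hδ1 : δ ≤ 1) (hC : 1 ≤ C)
    (hCB : ∀ x ∈ B, ∀ y ∈ B, DD hne r x y ≤ C) (hB : B.Nonempty) :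
    1 ≤ maxSepCard (DD hne r) δ B := by
  obtain ⟨z, hz⟩ := hB
  have hmem : 1 ∈ {N : ℕ | ∃ F : Finset (Fin m → ℝ), ↑F ⊆ B ∧
      (∀ x ∈ F, ∀ y ∈ F, x ≠ y → δ ≤ DD hne r x y) ∧ F.card = N} := by
    refine ⟨{z}, by simpa using hz, ?_, Finset.card_singleton z⟩
    intro x hx y hy hxy
    rcases Finset.mem_singleton.1 hx with rfl
    rcases Finset.mem_singleton.1 hy with rfl
    exact absurd rfl hxy
  exact le_csSup (sep_bddAbove hrpos hrsum hδ hδ1 hC hCB) hmem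

private lemma grid1d {a z L ε : ℝ} (hε : 0 < ε) (n : ℕ) (hn : L ≤ n * (2 * ε))
    (h1 : a ≤ z) (h2 : z < a + L) :
    ∃ j : ℕ, j < n ∧ |z - (a + (2 * j + 1) * ε)| ≤ ε := by
  have hza : 0 ≤ z - a := by linarith
  refine ⟨⌊(z - a) / (2 * ε)⌋₊, ?_, ?_⟩
  · rw [Nat.floor_lt (div_nonneg hza (by positivity))]
    rw [div_lt_iff₀ (by positivity)]
    nlinarith
  · have hle : (⌊(z - a) / (2 * ε)⌋₊ : ℝ) ≤ (z - a) / (2 * ε) :=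
      Nat.floor_le (by positivity)
    have hlt : (z - a) / (2 * ε) < ⌊(z - a) / (2 * ε)⌋₊ + 1 :=
      Nat.lt_floor_add_one _
    rw [le_div_iff₀ (by positivity)] at hle
    rw [div_lt_iff₀ (by positivity)] at hlt
    rw [abs_le]
    constructor <;> nlinarith

/-- Key per-`δ` inequality derived from `μH[s] B = ∞`. -/

private lemma key_ineq (hm : 0 < m) (hrpos : ∀ i, 0 < r i) (hrsum : ∑ i, r i = 1)
    (hr1 : ∀ i, r i ≤ r ⟨0, hm⟩)
    {B : Set (Fin m → ℝ)} {C : ℝ} (hC : 1 ≤ C)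
    (hCB : ∀ x ∈ B, ∀ y ∈ B, DD hne r x y ≤ C) {s : ℝ≥0}
    (hμ : μH[(s : ℝ)] B = ∞) :
    ∀ᶠ δ in 𝓝[>] (0:ℝ), (1:ℝ) ≤ (maxSepCard (DD hne r) δ B : ℝ) *
      (2 ^ m * δ ^ (1 - m * r ⟨0, hm⟩)) * (2 * δ ^ r ⟨0, hm⟩) ^ (s : ℝ) := by
  set r1 : ℝ := r ⟨0, hm⟩ with hr1def
  have hr1pos : 0 < r1 := hrpos _
  -- extract a scale ρ at which Hausdorff premeasure exceeds 1
  rw [MeasureTheory.Measure.hausdorffMeasure_apply] at hμ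
  have h1 : (1 : ℝ≥0∞) < ⨆ (ρ : ℝ≥0∞) (_ : 0 < ρ),
      ⨅ (t : ℕ → Set (Fin m → ℝ)) (_ : B ⊆ ⋃ n, t n) (_ : ∀ n, EMetric.diam (t n) ≤ ρ),
        ∑' n, ⨆ _ : (t n).Nonempty, EMetric.diam (t n) ^ (s : ℝ) := by
    exact lt_of_lt_of_eq one_lt_top hμ.symm
  rw [lt_iSup_iff] at h1
  obtain ⟨ρ, h1⟩ := h1
  rw [lt_iSup_iff] at h1
  obtain ⟨hρ, hI⟩ := h1
  set ρR : ℝ := (min ρ 1).toReal with hρRdef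
  have hρR : 0 < ρR := ENNReal.toReal_pos (lt_min hρ one_pos).ne'
    (ne_top_of_le_ne_top one_ne_top (min_le_right _ _))
  have hρRle : ENNReal.ofReal ρR ≤ ρ := by
    rw [hρRdef, ENNReal.ofReal_toReal (ne_top_of_le_ne_top one_ne_top (min_le_right _ _))]
    exact min_le_left _ _
  set dcap : ℝ := min 1 ((ρR / 2) ^ r1⁻¹) with hdcap
  have hdcap0 : 0 < dcap := lt_min one_pos (Real.rpow_pos_of_pos (by positivity) _)
  filter_upwards [Ioo_mem_nhdsGT_of_mem (Set.mem_Ico.2 ⟨le_refl (0:ℝ), hdcap0⟩)]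
    with δ hδmem
  obtain ⟨hδ, hδcap⟩ := hδmem
  have hδ1 : δ ≤ 1 := le_of_lt (lt_of_lt_of_le hδcap (min_le_left _ _))
  have hsmall : 2 * δ ^ r1 ≤ ρR := by
    have h := lt_of_lt_of_le hδcap (min_le_right _ _)
    have := Real.rpow_lt_rpow hδ.le h hr1pos
    rw [Real.rpow_inv_rpow (by positivity) hr1pos.ne'] at this
    linarith
  -- maximal separated set
  obtain ⟨F, hFB, hsep, hcard, hcover⟩ :=
    exists_maximal_sep hrpos hrsum hδ hδ1 hC hCB
  -- grid sizes
  set n : Fin m → ℕ := fun i => ⌈δ ^ (r i - r1)⌉₊ with hn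
  have hrige : ∀ i, (1:ℝ) ≤ δ ^ (r i - r1) := fun i =>
    Real.one_le_rpow_of_pos_of_le_one_of_nonpos hδ hδ1 (by linarith [hr1 i])
  have hnge : ∀ i, δ ^ (r i - r1) ≤ (n i : ℝ) := fun i => Nat.le_ceil _
  have hnle : ∀ i, (n i : ℝ) ≤ 2 * δ ^ (r i - r1) := fun i => by
    have := Nat.ceil_lt_add_one (le_trans zero_le_one (hrige i))
    linarith [hrige i]
  have hnmul : ∀ i, 2 * δ ^ r i ≤ (n i : ℝ) * (2 * δ ^ r1) := by
    intro i
    have h := mul_le_mul_of_nonneg_right (hnge i) (Real.rpow_nonneg hδ.le r1)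
    rw [← Real.rpow_add hδ, sub_add_cancel] at h
    nlinarith [h]
  -- the cubes
  set center : (Fin m → ℝ) → (∀ i : Fin m, Fin (n i)) → (Fin m → ℝ) :=
    fun x j i => x i - δ ^ r i + (2 * (j i : ℝ) + 1) * δ ^ r1 with hcenter
  set cube : ({x // x ∈ F} × (∀ i : Fin m, Fin (n i))) → Set (Fin m → ℝ) :=
    fun p => Metric.closedBall (center p.1 p.2) (δ ^ r1) with hcube
  have hcov : B ⊆ ⋃ p, cube p := by
    intro z hz
    obtain ⟨x, hxF, hxz⟩ := hcover z hz
    have hco := (DD_lt_iff hrpos hδ).1 hxz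
    have hsel : ∀ i : Fin m, ∃ j : ℕ, j < n i ∧
        |z i - (x i - δ ^ r i + (2 * j + 1) * δ ^ r1)| ≤ δ ^ r1 := by
      intro i
      have habs := abs_sub_lt_iff.1 (hco i)
      obtain ⟨j, hj1, hj2⟩ := grid1d (Real.rpow_pos_of_pos hδ r1) (n i) (hnmul i)
        (a := x i - δ ^ r i) (z := z i) (by linarith [habs.2]) (by linarith [habs.1])
      exact ⟨j, hj1, hj2⟩
    choose j hj1 hj2 using hsel
    refine Set.mem_iUnion.2 ⟨⟨⟨x, hxF⟩, fun i => ⟨j i, hj1 i⟩⟩, ?_⟩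
    simp only [hcube, Metric.mem_closedBall]
    rw [dist_pi_le_iff (Real.rpow_nonneg hδ.le r1)]
    intro i
    rw [Real.dist_eq]
    exact hj2 i
  have hdiam : ∀ p, EMetric.diam (cube p) ≤ ENNReal.ofReal (2 * δ ^ r1) := by
    intro p
    refine EMetric.diam_le fun a ha b hb => ?_
    rw [edist_dist]
    apply ENNReal.ofReal_le_ofReal
    have h1 := Metric.mem_closedBall.1 ha
    have h2 := Metric.mem_closedBall.1 hb
    calc dist a b ≤ dist a (center p.1 p.2) + dist (center p.1 p.2) b := dist_triangle _ _ _
      _ ≤ δ ^ r1 + δ ^ r1 := by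
          rw [dist_comm (center p.1 p.2) b]; exact add_le_add h1 h2
      _ = 2 * δ ^ r1 := by ring
  -- encode as ℕ-indexed family
  set K := Fintype.card ({x // x ∈ F} × (∀ i : Fin m, Fin (n i))) with hK
  set e := Fintype.equivFin ({x // x ∈ F} × (∀ i : Fin m, Fin (n i))) with he
  set t : ℕ → Set (Fin m → ℝ) := fun k =>
    if h : k < K then cube (e.symm ⟨k, h⟩) else ∅ with ht
  have htcov : B ⊆ ⋃ k, t k := by
    intro z hz
    obtain ⟨p, hp⟩ := Set.mem_iUnion.1 (hcov hz)
    refine Set.mem_iUnion.2 ⟨(e p : ℕ), ?_⟩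
    simp only [ht]
    simp only [Fin.is_lt, dif_pos, Fin.eta, Equiv.symm_apply_apply]
    rw [dif_pos (e p).is_lt]; simpa using hp
  have htdiam2 : ∀ k, EMetric.diam (t k) ≤ ENNReal.ofReal (2 * δ ^ r1) := by
    intro k
    simp only [ht]
    by_cases h : k < K
    · rw [dif_pos h]
      exact hdiam _
    · rw [dif_neg h]
      rw [show EMetric.diam (∅ : Set (Fin m → ℝ)) = 0 from Metric.ediam_empty]; exact zero_le
  have htdiam : ∀ k, EMetric.diam (t k) ≤ ρ := fun k =>
    le_trans (htdiam2 k) (le_trans (ENNReal.ofReal_le_ofReal hsmall) hρRle)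
  have hsum : ∑' k, ⨆ _ : (t k).Nonempty, EMetric.diam (t k) ^ (s:ℝ)
      ≤ (K : ℝ≥0∞) * ENNReal.ofReal (2 * δ ^ r1) ^ (s:ℝ) := by
    have hvanish : ∀ k ∉ Finset.range K,
        (⨆ _ : (t k).Nonempty, EMetric.diam (t k) ^ (s:ℝ)) = 0 := by
      intro k hk
      rw [Finset.mem_range, not_lt] at hk
      simp only [ht]
      simp only [dif_neg (not_lt.2 hk)]
      simp [Set.not_nonempty_empty]
    rw [tsum_eq_sum hvanish]
    calc ∑ k ∈ Finset.range K, ⨆ _ : (t k).Nonempty, EMetric.diam (t k) ^ (s:ℝ)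
        ≤ ∑ _k ∈ Finset.range K, ENNReal.ofReal (2 * δ ^ r1) ^ (s:ℝ) := by
          refine Finset.sum_le_sum fun k _ => ?_
          exact iSup_le fun _ => ENNReal.rpow_le_rpow (htdiam2 k) s.2
      _ = (K : ℝ≥0∞) * ENNReal.ofReal (2 * δ ^ r1) ^ (s:ℝ) := by
          rw [Finset.sum_const, Finset.card_range, nsmul_eq_mul]
  have hmain : (1 : ℝ≥0∞) < (K : ℝ≥0∞) * ENNReal.ofReal (2 * δ ^ r1) ^ (s:ℝ) := by
    refine lt_of_lt_of_le hI (le_trans ?_ hsum)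
    refine le_trans (iInf_le _ t) ?_
    refine le_trans (iInf_le _ htcov) ?_
    exact iInf_le _ htdiam
  -- convert to a real inequality
  have hpos : (0:ℝ) < 2 * δ ^ r1 := by positivity
  have hreal : (1:ℝ) ≤ (K : ℝ) * (2 * δ ^ r1) ^ (s:ℝ) := by
    have := hmain.le
    rw [ENNReal.ofReal_rpow_of_pos hpos] at this
    rw [show ((K : ℝ≥0∞)) = ENNReal.ofReal (K : ℝ) by rw [ENNReal.ofReal_natCast]] at this
    rw [← ENNReal.ofReal_mul (by positivity)] at this
    have h2 := (ENNReal.one_le_ofReal).1 (by exact_mod_cast this)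
    exact h2
  -- bound K
  have hKval : (K : ℝ) = (F.card : ℝ) * ∏ i, (n i : ℝ) := by
    rw [hK, Fintype.card_prod, Fintype.card_coe, Fintype.card_pi]
    simp only [Fintype.card_fin]
    push_cast
    ring
  have hprodle : ∏ i, (n i : ℝ) ≤ 2 ^ m * δ ^ (1 - m * r1) := by
    calc ∏ i, (n i : ℝ) ≤ ∏ i, (2 * δ ^ (r i - r1)) :=
          Finset.prod_le_prod (fun i _ => by positivity) (fun i _ => hnle i)
      _ = 2 ^ m * δ ^ (1 - m * r1) := by
          rw [Finset.prod_mul_distrib, Finset.prod_const, Finset.card_univ, Fintype.card_fin,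
            ← Real.rpow_sum_of_pos hδ]
          congr 2
          rw [Finset.sum_sub_distrib, hrsum, Finset.sum_const, Finset.card_univ,
            Fintype.card_fin, nsmul_eq_mul]
  have hNcard : (F.card : ℝ) = (maxSepCard (DD hne r) δ B : ℝ) := by exact_mod_cast hcard
  calc (1:ℝ) ≤ (K : ℝ) * (2 * δ ^ r1) ^ (s:ℝ) := hreal
    _ = (F.card : ℝ) * (∏ i, (n i : ℝ)) * (2 * δ ^ r1) ^ (s:ℝ) := by rw [hKval]
    _ ≤ (maxSepCard (DD hne r) δ B : ℝ) * (2 ^ m * δ ^ (1 - m * r1))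
          * (2 * δ ^ r1) ^ (s:ℝ) := by
        rw [← hNcard]
        have h1 : (0:ℝ) ≤ (F.card : ℝ) := Nat.cast_nonneg _
        have h2 : (0:ℝ) ≤ (2 * δ ^ r1) ^ (s:ℝ) := Real.rpow_nonneg hpos.le _
        exact mul_le_mul_of_nonneg_right
          (mul_le_mul_of_nonneg_left hprodle h1) h2

private lemma ev_upper (hrpos : ∀ i, 0 < r i) (hrsum : ∑ i, r i = 1)
    {B : Set (Fin m → ℝ)} {C : ℝ} (hC : 1 ≤ C)
    (hCB : ∀ x ∈ B, ∀ y ∈ B, DD hne r x y ≤ C) :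
    ∀ᶠ δ in 𝓝[>] (0:ℝ),
      Real.log ((maxSepCard (DD hne r) δ B : ℕ) : ℝ) / Real.log (1 / δ) ≤ 2 := by
  have hC0 : (0:ℝ) < 4 ^ m * C := by positivity
  have hdcap0 : (0:ℝ) < min (1/2) (1/(4 ^ m * C)) := by positivity
  filter_upwards [Ioo_mem_nhdsGT_of_mem (Set.mem_Ico.2 ⟨le_refl (0:ℝ), hdcap0⟩)]
    with δ hδmem
  obtain ⟨hδ, hcap⟩ := hδmem
  have hδhalf : δ < 1/2 := lt_of_lt_of_le hcap (min_le_left _ _)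
  have hδC : δ ≤ 1/(4 ^ m * C) := le_of_lt (lt_of_lt_of_le hcap (min_le_right _ _))
  have hL : 0 < Real.log (1/δ) := Real.log_pos (by rw [lt_div_iff₀ hδ]; linarith)
  set N := maxSepCard (DD hne r) δ B with hN
  rcases Nat.eq_zero_or_pos N with h0 | hpos
  · rw [h0]
    norm_num
  · have hNle : (N : ℝ) * δ ≤ 4 ^ m * C :=
      maxSepCard_le hrpos hrsum hδ (by linarith) hC hCB
    have h1 : (4:ℝ) ^ m * C ≤ 1/δ := by
      rw [le_div_iff₀ hδ]
      rw [le_div_iff₀ hC0] at hδC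
      nlinarith
    have h2 : (N : ℝ) ≤ (1/δ) ^ (2:ℕ) := by
      have : (N:ℝ) ≤ (4 ^ m * C) / δ := by rw [le_div_iff₀ hδ]; exact hNle
      calc (N:ℝ) ≤ (4 ^ m * C) / δ := this
        _ ≤ (1/δ) / δ := (div_le_div_iff_of_pos_right hδ).2 h1
        _ = (1/δ)^(2:ℕ) := by field_simp
    have h3 : Real.log (N:ℝ) ≤ 2 * Real.log (1/δ) := by
      calc Real.log (N:ℝ) ≤ Real.log ((1/δ)^(2:ℕ)) :=
            Real.log_le_log (by exact_mod_cast hpos) h2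
        _ = 2 * Real.log (1/δ) := by rw [Real.log_pow]; norm_num
    rw [div_le_iff₀ hL]
    exact h3

private lemma bdd_set (hrpos : ∀ i, 0 < r i) (hrsum : ∑ i, r i = 1)
    {B : Set (Fin m → ℝ)} {C : ℝ} (hC : 1 ≤ C)
    (hCB : ∀ x ∈ B, ∀ y ∈ B, DD hne r x y ≤ C) :
    ∀ a ∈ {a : ℝ | ∀ᶠ δ in 𝓝[>] (0:ℝ),
      a ≤ Real.log ((maxSepCard (DD hne r) δ B : ℕ) : ℝ) / Real.log (1 / δ)}, a ≤ 2 := by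
  intro a ha
  rw [Set.mem_setOf_eq] at ha
  obtain ⟨δ, h1, h2⟩ := (ha.and (ev_upper hrpos hrsum hC hCB)).exists
  linarith

private lemma liminf_le_two (hrpos : ∀ i, 0 < r i) (hrsum : ∑ i, r i = 1)
    {B : Set (Fin m → ℝ)} {C : ℝ} (hC : 1 ≤ C)
    (hCB : ∀ x ∈ B, ∀ y ∈ B, DD hne r x y ≤ C) :
    Filter.liminf
      (fun δ : ℝ => Real.log ((maxSepCard (DD hne r) δ B : ℕ) : ℝ) / Real.log (1 / δ))
      (𝓝[>] (0:ℝ)) ≤ 2 := by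
  rw [Filter.liminf_eq]
  exact Real.sSup_le (bdd_set hrpos hrsum hC hCB) (by norm_num)

private lemma liminf_lower (hm : 0 < m) (hrpos : ∀ i, 0 < r i) (hrsum : ∑ i, r i = 1)
    (hr1 : ∀ i, r i ≤ r ⟨0, hm⟩)
    {B : Set (Fin m → ℝ)} {C : ℝ} (hC : 1 ≤ C)
    (hCB : ∀ x ∈ B, ∀ y ∈ B, DD hne r x y ≤ C) {s : ℝ≥0}
    (hμ : μH[(s : ℝ)] B = ∞) :
    1 - m * r ⟨0, hm⟩ + r ⟨0, hm⟩ * s ≤ Filter.liminf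
      (fun δ : ℝ => Real.log ((maxSepCard (DD hne r) δ B : ℕ) : ℝ) / Real.log (1 / δ))
      (𝓝[>] (0:ℝ)) := by
  set r1 : ℝ := r ⟨0, hm⟩ with hr1def
  have hr1pos : 0 < r1 := hrpos _
  rw [Filter.liminf_eq]
  apply le_of_forall_sub_le
  intro ε hε
  set c : ℝ := 1 - m * r1 + r1 * s with hc
  have hm1 : (1:ℝ) ≤ m := by exact_mod_cast hm
  have hKpos : 0 < ((m:ℝ) + s) * Real.log 2 / ε := by
    apply div_pos _ hε
    apply mul_pos _ (Real.log_pos (by norm_num))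
    positivity
  set Kc : ℝ := ((m:ℝ) + s) * Real.log 2 / ε with hKc
  have hmem : c - ε ∈ {a : ℝ | ∀ᶠ δ in 𝓝[>] (0:ℝ),
      a ≤ Real.log ((maxSepCard (DD hne r) δ B : ℕ) : ℝ) / Real.log (1 / δ)} := by
    have hdcap0 : (0:ℝ) < min (1/2) (Real.exp (-Kc)) := lt_min (by norm_num) (Real.exp_pos _)
    filter_upwards [key_ineq hm hrpos hrsum hr1 hC hCB hμ,
      Ioo_mem_nhdsGT_of_mem (Set.mem_Ico.2 ⟨le_refl (0:ℝ), hdcap0⟩)] with δ hkey hδmem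
    obtain ⟨hδ, hcap⟩ := hδmem
    have hδhalf : δ < 1/2 := lt_of_lt_of_le hcap (min_le_left _ _)
    have hδexp : δ ≤ Real.exp (-Kc) := le_of_lt (lt_of_lt_of_le hcap (min_le_right _ _))
    have hL : 0 < Real.log (1/δ) := Real.log_pos (by rw [lt_div_iff₀ hδ]; linarith)
    set L : ℝ := Real.log (1/δ) with hLdef
    have hLK : Kc ≤ L := by
      have h1 : Real.exp Kc ≤ 1/δ := by
        rw [le_div_iff₀ hδ]
        have := mul_le_mul_of_nonneg_left hδexp (Real.exp_pos Kc).le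
        rw [← Real.exp_add] at this
        simpa using this
      calc Kc = Real.log (Real.exp Kc) := (Real.log_exp _).symm
        _ ≤ L := Real.log_le_log (Real.exp_pos _) h1
    set N : ℕ := maxSepCard (DD hne r) δ B with hN
    set A : ℝ := 2 ^ m * δ ^ (1 - m * r1) with hA
    set Bv : ℝ := (2 * δ ^ r1) ^ (s:ℝ) with hBv
    have hApos : 0 < A := by
      rw [hA]; positivity
    have hBpos : 0 < Bv := Real.rpow_pos_of_pos (by positivity) _
    have hNpos : (0:ℝ) < (N:ℝ) := by nlinarith [mul_pos hApos hBpos]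
    have hlogN : Real.log ((N:ℝ) * A * Bv) = Real.log (N:ℝ) + Real.log A + Real.log Bv := by
      rw [Real.log_mul (by positivity) hBpos.ne', Real.log_mul hNpos.ne' hApos.ne']
    have hlogA : Real.log A = m * Real.log 2 + (1 - m * r1) * Real.log δ := by
      rw [hA, Real.log_mul (by positivity) (Real.rpow_pos_of_pos hδ _).ne',
        Real.log_pow, Real.log_rpow hδ]
    have hlogB : Real.log Bv = s * (Real.log 2 + r1 * Real.log δ) := by
      rw [hBv, Real.log_rpow (by positivity),
        Real.log_mul (by norm_num) (Real.rpow_pos_of_pos hδ _).ne', Real.log_rpow hδ]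
    have hLd : Real.log δ = -L := by
      rw [hLdef, one_div, Real.log_inv]; ring
    have h0 : 0 ≤ Real.log ((N:ℝ) * A * Bv) := Real.log_nonneg hkey
    rw [hlogN, hlogA, hlogB, hLd] at h0
    have hεL : ((m:ℝ) + s) * Real.log 2 ≤ ε * L := by
      calc ((m:ℝ) + s) * Real.log 2 = ε * Kc := by rw [hKc]; field_simp
        _ ≤ ε * L := mul_le_mul_of_nonneg_left hLK hε.le
    show c - ε ≤ Real.log ((N:ℕ) : ℝ) / L
    rw [le_div_iff₀ hL]
    nlinarith [h0, hεL]
  have hbdd : BddAbove {a : ℝ | ∀ᶠ δ in 𝓝[>] (0:ℝ),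
      a ≤ Real.log ((maxSepCard (DD hne r) δ B : ℕ) : ℝ) / Real.log (1 / δ)} :=
    ⟨2, fun a ha => bdd_set hrpos hrsum hC hCB a ha⟩
  exact le_csSup hbdd hmem

/-- `dim_r(S) ≥ 1 − r_1 (m − dim_H S)` for `S ⊆ ℝ^m`. -/
theorem lowerMinkDim_r_ge {m : ℕ} (hm : 0 < m) (r : Fin m → ℝ)
    (hrpos : ∀ i, 0 < r i)
    (hrmono : ∀ i i' : Fin m, i ≤ i' → r i' ≤ r i)
    (hrsum : ∑ i, r i = 1)
    (S : Set (Fin m → ℝ)) :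
    1 - r ⟨0, hm⟩ * ((m : ℝ) - (dimH S).toReal) ≤
      lowerMinkDim
        (fun x y => Finset.univ.sup'
          (Finset.univ_nonempty_iff.mpr (Fin.pos_iff_nonempty.mp hm))
          (fun i => |x i - y i| ^ (r i)⁻¹)) S := by
  have hne : (Finset.univ : Finset (Fin m)).Nonempty :=
    Finset.univ_nonempty_iff.mpr (Fin.pos_iff_nonempty.mp hm)
  show 1 - r ⟨0, hm⟩ * ((m : ℝ) - (dimH S).toReal) ≤ lowerMinkDim (DD hne r) S
  have hr1 : ∀ i, r i ≤ r ⟨0, hm⟩ := fun i => hrmono ⟨0, hm⟩ i (by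
    rw [Fin.le_def]; exact Nat.zero_le _)
  have hr1pos : 0 < r ⟨0, hm⟩ := hrpos _
  have hmr1 : (1:ℝ) ≤ m * r ⟨0, hm⟩ := by
    calc (1:ℝ) = ∑ i, r i := hrsum.symm
      _ ≤ ∑ _i : Fin m, r ⟨0, hm⟩ := Finset.sum_le_sum (fun i _ => hr1 i)
      _ = m * r ⟨0, hm⟩ := by
          rw [Finset.sum_const, Finset.card_univ, Fintype.card_fin, nsmul_eq_mul]
  have hbddR : BddAbove (Set.range
      (fun B : {B : Set (Fin m → ℝ) // B ⊆ S ∧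
          ∃ C : ℝ, ∀ x ∈ B, ∀ y ∈ B, DD hne r x y ≤ C} =>
        Filter.liminf
          (fun δ : ℝ => Real.log ((maxSepCard (DD hne r) δ B.1 : ℕ) : ℝ) / Real.log (1 / δ))
          (𝓝[>] (0:ℝ)))) := by
    refine ⟨2, ?_⟩
    rintro x ⟨B, rfl⟩
    obtain ⟨C, hCB⟩ := B.2.2
    exact liminf_le_two hrpos hrsum (le_max_right C 1)
      (fun x hx y hy => le_trans (hCB x hx y hy) (le_max_left _ _))
  have hempty : ∀ δ : ℝ, maxSepCard (DD hne r) δ (∅ : Set (Fin m → ℝ)) = 0 := by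
    intro δ
    have hset : {N : ℕ | ∃ F : Finset (Fin m → ℝ), ↑F ⊆ (∅ : Set (Fin m → ℝ)) ∧
        (∀ x ∈ F, ∀ y ∈ F, x ≠ y → δ ≤ DD hne r x y) ∧ F.card = N} = {0} := by
      ext N
      simp only [Set.mem_setOf_eq, Set.mem_singleton_iff]
      constructor
      · rintro ⟨F, hF, _, rfl⟩
        rw [Set.subset_empty_iff, Finset.coe_eq_empty] at hF
        rw [hF, Finset.card_empty]
      · rintro rfl
        exact ⟨∅, by simp⟩
    rw [maxSepCard, hset, csSup_singleton]
  have hzero : (0:ℝ) ≤ lowerMinkDim (DD hne r) S := by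
    have hval : Filter.liminf
        (fun δ : ℝ => Real.log ((maxSepCard (DD hne r) δ
          ((⟨∅, by simp, 0, by simp⟩ : {B : Set (Fin m → ℝ) // B ⊆ S ∧
            ∃ C : ℝ, ∀ x ∈ B, ∀ y ∈ B, DD hne r x y ≤ C}) : {B : Set (Fin m → ℝ) // B ⊆ S ∧
            ∃ C : ℝ, ∀ x ∈ B, ∀ y ∈ B, DD hne r x y ≤ C}).1 : ℕ) : ℝ) / Real.log (1 / δ))
        (𝓝[>] (0:ℝ)) = 0 := by
      simp only [hempty, Nat.cast_zero, Real.log_zero, zero_div]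
      exact Filter.liminf_const 0
    rw [lowerMinkDim]
    exact le_trans (le_of_eq hval.symm) (le_ciSup hbddR _)
  set h : ℝ := (dimH S).toReal with hh
  have hgoal : 1 - r ⟨0, hm⟩ * ((m : ℝ) - h) = 1 - m * r ⟨0, hm⟩ + r ⟨0, hm⟩ * h := by ring
  rw [hgoal]
  by_cases hcs : 1 - m * r ⟨0, hm⟩ + r ⟨0, hm⟩ * h ≤ 0
  · linarith
  push_neg at hcs
  have hh0 : 0 < h := by nlinarith
  have hfin : dimH S ≠ ⊤ := by
    have h1 : dimH S ≤ dimH (univ : Set (Fin m → ℝ)) := dimH_mono (Set.subset_univ _)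
    rw [Real.dimH_univ_pi_fin] at h1
    exact ne_top_of_le_ne_top (ENNReal.natCast_ne_top m) h1
  apply le_of_forall_sub_le
  intro ε hε
  set ee : ℝ := min (ε / r ⟨0, hm⟩) (h / 2) with hee
  have hee0 : 0 < ee := lt_min (div_pos hε hr1pos) (by linarith)
  set t : ℝ := h - ee with htdef
  have ht0 : 0 ≤ t := by
    have : ee ≤ h / 2 := min_le_right _ _
    simp only [htdef]; linarith
  have htlt : t < h := by simp only [htdef]; linarith
  set s' : ℝ≥0 := Real.toNNReal t with hs'
  have hs'val : (s' : ℝ) = t := Real.coe_toNNReal t ht0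
  have hs'lt : (s' : ℝ≥0∞) < dimH S := by
    have heq : ((s' : ℝ≥0) : ℝ≥0∞) = ENNReal.ofReal t := rfl
    rw [heq, ENNReal.ofReal_lt_iff_lt_toReal ht0 hfin]
    exact htlt
  have hUnion : S = ⋃ n : ℕ, S ∩ Metric.closedBall 0 n := by
    ext x
    simp only [Set.mem_iUnion, Set.mem_inter_iff, Metric.mem_closedBall]
    constructor
    · intro hx
      exact ⟨⌈dist x 0⌉₊, hx, Nat.le_ceil _⟩
    · rintro ⟨n, hx, _⟩
      exact hx
  have hdim : (s' : ℝ≥0∞) < ⨆ n : ℕ, dimH (S ∩ Metric.closedBall 0 n) := by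
    rwa [← dimH_iUnion, ← hUnion]
  rw [lt_iSup_iff] at hdim
  obtain ⟨n, hn⟩ := hdim
  set B : Set (Fin m → ℝ) := S ∩ Metric.closedBall 0 n with hB
  have hμ : μH[(s' : ℝ)] B = ∞ := hausdorffMeasure_of_lt_dimH hn
  set C : ℝ := max 1 (Finset.univ.sup' hne (fun i => (2 * (n:ℝ) + 1) ^ (r i)⁻¹)) with hCdef
  have hC : 1 ≤ C := le_max_left _ _
  have hCB : ∀ x ∈ B, ∀ y ∈ B, DD hne r x y ≤ C := by
    intro x hx y hy
    refine le_trans ?_ (le_max_right _ _)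
    rw [DD]
    apply Finset.sup'_mono_fun
    intro i _
    apply Real.rpow_le_rpow (abs_nonneg _) ?_ (inv_nonneg.2 (hrpos i).le)
    have hx' := Metric.mem_closedBall.1 hx.2
    have hy' := Metric.mem_closedBall.1 hy.2
    have h1 : dist x y ≤ 2 * n := by
      calc dist x y ≤ dist x 0 + dist 0 y := dist_triangle _ _ _
        _ ≤ n + n := by rw [dist_comm (0 : Fin m → ℝ) y]; exact add_le_add hx' hy'
        _ = 2 * n := by ring
    have h2 : dist (x i) (y i) ≤ dist x y := dist_le_pi_dist x y i
    rw [Real.dist_eq] at h2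
    linarith
  have hlow := liminf_lower hm hrpos hrsum hr1 hC hCB hμ
  rw [hs'val] at hlow
  have hle : Filter.liminf
      (fun δ : ℝ => Real.log ((maxSepCard (DD hne r) δ B : ℕ) : ℝ) / Real.log (1 / δ))
      (𝓝[>] (0:ℝ)) ≤ lowerMinkDim (DD hne r) S := by
    rw [lowerMinkDim]
    exact le_ciSup hbddR ⟨B, Set.inter_subset_left, ⟨C, hCB⟩⟩
  have hstep : 1 - m * r ⟨0, hm⟩ + r ⟨0, hm⟩ * h - ε ≤
      1 - m * r ⟨0, hm⟩ + r ⟨0, hm⟩ * t := by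
    have h1 : ee ≤ ε / r ⟨0, hm⟩ := min_le_left _ _
    have h2 : r ⟨0, hm⟩ * ee ≤ ε := by
      rw [← le_div_iff₀' hr1pos]
      exact h1
    simp only [htdef]
    nlinarith
  exact le_trans (le_trans hstep hlow) hle
end

section
/- A matrix A ∈ M_{m,n}(ℝ) is singular on average if and only if its transpose A^T ∈ M_{n,m}(ℝ) is singular on average. -/
open Filter Topology MeasureTheory
open scoped ENNReal


/-- The weighted `w`-quasinorm `‖x‖_w = max_i |x_i|^{1/w_i}` on `ℝ^k`. -/
noncomputable def qnorm {k : ℕ} (hk : 0 < k) (w : Fin k → ℝ) (x : Fin k → ℝ) : ℝ :=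
  Finset.univ.sup' (Finset.univ_nonempty_iff.mpr (Fin.pos_iff_nonempty.mp hk))
    (fun i => |x i| ^ (w i)⁻¹)

/-- `⟨x⟩_w = inf_{p ∈ ℤ^k} ‖x − p‖_w`, the quasinorm distance to the integer lattice. -/
noncomputable def idist {k : ℕ} (hk : 0 < k) (w : Fin k → ℝ) (x : Fin k → ℝ) : ℝ :=
  ⨅ p : Fin k → ℤ, qnorm hk w (fun i => x i - (p i : ℝ))

/-- `A ∈ M_{m,n}(ℝ)` is singular on average (with weights `r`, `s`). -/
noncomputable def SingularOnAverage {m n : ℕ} (hm : 0 < m) (hn : 0 < n)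
    (r : Fin m → ℝ) (s : Fin n → ℝ) (A : Matrix (Fin m) (Fin n) ℝ) : Prop :=
  ∀ ε : ℝ, 0 < ε →
    Filter.Tendsto (fun N : ℕ =>
      (({l : ℕ | 1 ≤ l ∧ l ≤ N ∧ ∃ q : Fin n → ℤ,
          idist hm r (fun i => ∑ j, A i j * (q j : ℝ)) < ε * 2 ^ (-(l : ℝ)) ∧
          0 < qnorm hn s (fun j => (q j : ℝ)) ∧
          qnorm hn s (fun j => (q j : ℝ)) < 2 ^ (l : ℝ)}.ncard : ℝ) / N))
      Filter.atTop (𝓝 1)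


section Core


variable {ι : Type*} [Fintype ι] [DecidableEq ι]

/-- Auxiliary: `vecMul` as a linear combination of rows. -/
lemma vecMul_eq_sum_smul (φ : ι → ℝ) (M : Matrix ι ι ℝ) :
    Matrix.vecMul φ M = ∑ k, φ k • M k := by
  ext j
  simp [Matrix.vecMul, dotProduct, Finset.sum_apply]

/-- Core geometry-of-numbers lemma: a "hyperplane Minkowski" statement, proved by applying
Minkowski's convex body theorem to the preimage of a box under a linear map. -/
lemma core_lattice (M : Matrix ι ι ℝ) (hdet : |M.det| = 1)
    (φ : ι → ℝ) (ψ : ι → ℤ) (hφψ : Matrix.vecMul φ M = fun k => (ψ k : ℝ))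
    (k₀ : ι) (hk₀ : φ k₀ ≠ 0) (μ : ℝ) (hμpos : 0 < μ)
    (hvol : 2 * |φ k₀| < μ ^ (Fintype.card ι - 1)) :
    ∃ x : ι → ℤ, x ≠ 0 ∧
      (∀ k, k ≠ k₀ → |(M.mulVec (fun i => (x i : ℝ))) k| ≤ μ) ∧
      |φ k₀| * |(M.mulVec (fun i => (x i : ℝ))) k₀| ≤ ∑ k ∈ Finset.univ.erase k₀, |φ k| * μ := by
  classical
  set d := Fintype.card ι with hd
  have hιne : Nonempty ι := ⟨k₀⟩
  have hd1 : 1 ≤ d := Fintype.card_pos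
  set e := d - 1 with he
  have hde : d = e + 1 := (Nat.succ_pred_eq_of_pos hd1).symm
  -- the matrix of the linear map defining the body
  set T : Matrix ι ι ℝ := M.updateRow k₀ (Matrix.vecMul φ M) with hT
  have hTdet : T.det = φ k₀ * M.det := by
    rw [hT, vecMul_eq_sum_smul, Matrix.det_updateRow_sum M k₀ φ]; rfl
  have hTdetabs : |T.det| = |φ k₀| := by
    rw [hTdet, abs_mul, hdet, mul_one]
  have hTdet0 : T.det ≠ 0 := fun h => by
    rw [h, abs_zero] at hTdetabs; exact hk₀ (abs_eq_zero.mp hTdetabs.symm)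
  set f : (ι → ℝ) →ₗ[ℝ] (ι → ℝ) := Matrix.toLin' T with hf
  have hfdet : LinearMap.det f = T.det := LinearMap.det_toLin' T
  have hfdet0 : LinearMap.det f ≠ 0 := by rw [hfdet]; exact hTdet0
  -- the box
  set bnd : ι → ℝ := fun k => if k = k₀ then 1/2 else μ with hbnd
  have hbndpos : ∀ k, 0 < bnd k := by
    intro k; by_cases h : k = k₀ <;> simp [hbnd, h, hμpos]
  set box : Set (ι → ℝ) := Set.univ.pi fun k => Set.Icc (-(bnd k)) (bnd k) with hbox
  set s : Set (ι → ℝ) := ⇑f ⁻¹' box with hs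
  -- convexity and symmetry
  have hconv : Convex ℝ s := by
    apply Convex.linear_preimage
    exact convex_pi fun k _ => convex_Icc _ _
  have hsymm : ∀ x ∈ s, -x ∈ s := by
    intro x hx
    simp only [hs, Set.mem_preimage, map_neg] at hx ⊢
    intro k hk
    have := hx k hk
    simp only [Set.mem_Icc, Pi.neg_apply] at this ⊢
    constructor <;> linarith [this.1, this.2]
  -- volume computation
  have hboxvol : volume box = ENNReal.ofReal (∏ k, (2 * bnd k)) := by
    rw [hbox, volume_pi_pi]
    rw [ENNReal.ofReal_prod_of_nonneg (fun k _ => by positivity)]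
    congr 1; ext k; rw [Real.volume_Icc]; congr 1; ring
  have hsvol : volume s = ENNReal.ofReal (|φ k₀|⁻¹ * ∏ k, (2 * bnd k)) := by
    rw [hs, Measure.addHaar_preimage_linearMap volume hfdet0 box, hboxvol,
      ← ENNReal.ofReal_mul (by positivity)]
    congr 2
    rw [abs_inv, hfdet, hTdetabs]
  -- the lattice
  set b : Module.Basis ι ℝ (ι → ℝ) := Pi.basisFun ℝ ι with hb
  have fund := ZSpan.isAddFundamentalDomain' b volume
  have hfundvol : volume (ZSpan.fundamentalDomain b) = 1 := by
    rw [hb, ZSpan.fundamentalDomain_pi_basisFun, volume_pi_pi]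
    simp [Real.volume_Ico]
  -- the volume condition
  have hprod : ∏ k, (2 * bnd k) = (2*μ) ^ e := by
    rw [← Finset.mul_prod_erase Finset.univ _ (Finset.mem_univ k₀)]
    have h1 : (2 : ℝ) * bnd k₀ = 1 := by simp [hbnd]
    rw [h1, one_mul]
    rw [Finset.prod_congr rfl (fun k hk => by
      simp only [hbnd]
      rw [if_neg (Finset.ne_of_mem_erase hk)]), Finset.prod_const,
      Finset.card_erase_of_mem (Finset.mem_univ k₀), Finset.card_univ]
  have hkey : (1 : ℝ≥0∞) * 2 ^ (Module.finrank ℝ (ι → ℝ)) < volume s := by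
    rw [one_mul, hsvol, Module.finrank_pi, hprod]
    have h2 : (2 : ℝ≥0∞) ^ d = ENNReal.ofReal ((2:ℝ) ^ d) := by
      rw [ENNReal.ofReal_pow (by norm_num)]; norm_num
    rw [← hd, h2, ENNReal.ofReal_lt_ofReal_iff]
    · have hφpos : 0 < |φ k₀| := abs_pos.mpr hk₀
      rw [mul_pow, hde, pow_succ]
      rw [lt_inv_mul_iff₀ hφpos]
      calc |φ k₀| * (2 ^ e * 2) = 2 ^ e * (2 * |φ k₀|) := by ring
        _ < 2 ^ e * μ ^ e := by
            exact mul_lt_mul_of_pos_left hvol (by positivity)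
    · positivity
  -- apply Minkowski
  haveI : Countable ↥(Submodule.span ℤ (Set.range ⇑b)).toAddSubgroup := by
    exact (inferInstance : Countable ↥(Submodule.span ℤ (Set.range ⇑b)))
  obtain ⟨y, hy0, hys⟩ := exists_ne_zero_mem_lattice_of_measure_mul_two_pow_lt_measure
    (μ := volume) (L := (Submodule.span ℤ (Set.range ⇑b)).toAddSubgroup)
    fund hsymm hconv (by rw [hfundvol]; exact hkey)
  -- extract the integer vector
  have hmem : (y : ι → ℝ) ∈ Submodule.span ℤ (Set.range ⇑b) := y.2
  have hint : ∀ k, ∃ z : ℤ, ((y : ι → ℝ)) k = (z : ℝ) := by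
    intro k
    have := (b.mem_span_iff_repr_mem ℤ _).mp hmem k
    obtain ⟨z, hz⟩ := this
    refine ⟨z, ?_⟩
    simp only [hb, Pi.basisFun_repr] at hz
    rw [← hz]; simp [algebraMap_int_eq]
  choose x hx using hint
  have hyx : (y : ι → ℝ) = fun k => (x k : ℝ) := funext hx
  refine ⟨x, ?_, ?_, ?_⟩
  · intro h0
    apply hy0
    have : (y : ι → ℝ) = 0 := by
      rw [hyx, h0]; ext k; simp
    exact Subtype.ext this
  all_goals {
    have hfy : ∀ k, |(T.mulVec (fun i => (x i : ℝ))) k| ≤ bnd k := by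
      intro k
      have hys' : ⇑f (y : ι → ℝ) ∈ box := hys
      rw [hyx] at hys'
      have : (Matrix.toLin' T) (fun i => (x i : ℝ)) ∈ box := hys'
      rw [Matrix.toLin'_apply] at this
      have hk := this k (Set.mem_univ k)
      rw [Set.mem_Icc] at hk
      exact abs_le.mpr hk
    have hTk : ∀ k, k ≠ k₀ → (T.mulVec (fun i => (x i : ℝ))) k
        = (M.mulVec (fun i => (x i : ℝ))) k := by
      intro k hkk
      show dotProduct (T k) _ = dotProduct (M k) _
      rw [hT, Matrix.updateRow_ne hkk]
    have hMbound : ∀ k, k ≠ k₀ → |(M.mulVec (fun i => (x i : ℝ))) k| ≤ μ := by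
      intro k hkk
      have := hfy k
      rw [hTk k hkk] at this
      simp only [hbnd] at this
      rwa [if_neg hkk] at this
    have hZ : (T.mulVec (fun i => (x i : ℝ))) k₀ = ((∑ k, ψ k * x k : ℤ) : ℝ) := by
      show dotProduct (T k₀) _ = _
      rw [hT, Matrix.updateRow_self, hφψ]
      rw [dotProduct]
      push_cast
      rfl
    have hZ0 : (∑ k, ψ k * x k : ℤ) = 0 := by
      have h1 := hfy k₀
      rw [hZ] at h1
      simp only [hbnd, if_pos] at h1
      have : |(∑ k, ψ k * x k : ℤ)| < 1 := by
        have : |((∑ k, ψ k * x k : ℤ) : ℝ)| < 1 := lt_of_le_of_lt h1 (by norm_num)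
        exact_mod_cast this
      exact Int.abs_lt_one_iff.mp this
    have hpair : dotProduct φ (M.mulVec (fun i => (x i : ℝ))) = 0 := by
      rw [Matrix.dotProduct_mulVec, hφψ]
      have : dotProduct (fun k => ((ψ k : ℝ))) (fun i => (x i : ℝ))
          = ((∑ k, ψ k * x k : ℤ) : ℝ) := by
        rw [dotProduct]; push_cast; rfl
      rw [this, hZ0]; simp
    have hsplit : φ k₀ * (M.mulVec (fun i => (x i : ℝ))) k₀
        = - ∑ k ∈ Finset.univ.erase k₀, φ k * (M.mulVec (fun i => (x i : ℝ))) k := by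
      have := hpair
      rw [dotProduct] at this
      rw [← Finset.add_sum_erase Finset.univ _ (Finset.mem_univ k₀)] at this
      linarith
    first
    | exact hMbound
    | { rw [← abs_mul, hsplit, abs_neg]
        refine le_trans (Finset.abs_sum_le_sum_abs _ _) (Finset.sum_le_sum ?_)
        intro k hk
        rw [abs_mul]
        exact mul_le_mul_of_nonneg_left (hMbound k (Finset.ne_of_mem_erase hk)) (abs_nonneg _) } }

end Core

lemma prod_rpow_sum {α : Type*} (f : α → ℝ) (u : Finset α) :
    ∏ i ∈ u, (2:ℝ) ^ (f i) = (2:ℝ) ^ (∑ i ∈ u, f i) := by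
  simp only [Real.rpow_def_of_pos (by norm_num : (0:ℝ) < 2)]
  rw [← Real.exp_sum, Finset.mul_sum]


/-- The single-step transference: from a good primal approximation, produce a dual one. -/
lemma dual_exists {m n : ℕ} (hm : 0 < m) (hn : 0 < n)
    (r : Fin m → ℝ) (s : Fin n → ℝ)
    (hrpos : ∀ i, 0 < r i) (hspos : ∀ j, 0 < s j)
    (hrsum : ∑ i, r i = 1) (hssum : ∑ j, s j = 1)
    (A : Matrix (Fin m) (Fin n) ℝ) (t : ℝ) (ht : 0 ≤ t)
    (ρ : ℝ) (hρ : 0 < ρ)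
    (q : Fin n → ℤ) (p : Fin m → ℤ) (hq : q ≠ 0)
    (h1 : ∀ i, (2:ℝ)^(t * r i) * |∑ j, A i j * (q j : ℝ) - (p i : ℝ)| ≤ ρ)
    (h2 : ∀ j, (2:ℝ)^(-(t * s j)) * |(q j : ℝ)| ≤ ρ)
    (c : ℝ)
    (hcdef : c = ((m+n-1 : ℕ) : ℝ) * ((2:ℝ)^(m+n) * ρ) ^ (((m+n-1 : ℕ):ℝ))⁻¹)
    (hc1 : c < 1) :
    ∃ (p' : Fin m → ℤ) (q' : Fin n → ℤ), p' ≠ 0 ∧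
      (∀ i, |(p' i : ℝ)| ≤ c * 2^(t * r i)) ∧
      (∀ j, |∑ i, A i j * (p' i : ℝ) - (q' j : ℝ)| ≤ c * 2^(-(t * s j))) := by
  classical
  set d := m + n with hd
  have hd2 : 2 ≤ d := by omega
  set D := d - 1 with hD
  have hD1 : 1 ≤ D := by omega
  have hDd : D + 1 = d := by omega
  -- the matrix
  set M : Matrix (Fin m ⊕ Fin n) (Fin m ⊕ Fin n) ℝ :=
    Matrix.fromBlocks (Matrix.diagonal fun i => (2:ℝ)^(-(t * r i))) 0
      (Matrix.of fun j i => -((2:ℝ)^(t * s j) * A i j))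
      (Matrix.diagonal fun j => (2:ℝ)^(t * s j)) with hM
  have hcard : Fintype.card (Fin m ⊕ Fin n) = d := by
    simp [Fintype.card_sum, hd]
  have hdet : |M.det| = 1 := by
    rw [hM, Matrix.det_fromBlocks_zero₁₂, Matrix.det_diagonal, Matrix.det_diagonal,
      prod_rpow_sum, prod_rpow_sum]
    rw [← Real.rpow_add (by norm_num)]
    have e : (∑ i : Fin m, -(t * r i)) + ∑ j : Fin n, t * s j = 0 := by
      simp only [← neg_mul]
      rw [← Finset.mul_sum, ← Finset.mul_sum, hrsum, hssum]; ring
    rw [e]; norm_num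
  -- the vectors
  set φ : Fin m ⊕ Fin n → ℝ :=
    Sum.elim (fun i => (2:ℝ)^(t * r i) * (∑ j, A i j * (q j : ℝ) - (p i : ℝ)))
      (fun j => (2:ℝ)^(-(t * s j)) * (q j : ℝ)) with hφ
  set ψ : Fin m ⊕ Fin n → ℤ := Sum.elim (fun i => -(p i)) q with hψ
  have hφψ : Matrix.vecMul φ M = fun k => ((ψ k : ℝ)) := by
    funext k
    have hvm : Matrix.vecMul φ M k = ∑ k', φ k' * M k' k := by
      simp [Matrix.vecMul, dotProduct]
    rw [hvm, Fintype.sum_sum_type]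
    cases k with
    | inl i =>
      have e1 : ∀ i' : Fin m, φ (Sum.inl i') * M (Sum.inl i') (Sum.inl i)
          = φ (Sum.inl i') * (Matrix.diagonal fun i => (2:ℝ)^(-(t * r i))) i' i := by
        intro i'; rfl
      have e2 : (∑ i' : Fin m, φ (Sum.inl i') * M (Sum.inl i') (Sum.inl i))
          = φ (Sum.inl i) * (2:ℝ)^(-(t * r i)) := by
        rw [Finset.sum_congr rfl fun i' _ => e1 i']
        rw [Finset.sum_eq_single i]
        · simp [Matrix.diagonal_apply_eq]
        · intro b _ hb; simp [Matrix.diagonal_apply_ne _ hb]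
        · intro h; exact absurd (Finset.mem_univ i) h
      have e3 : (∑ j : Fin n, φ (Sum.inr j) * M (Sum.inr j) (Sum.inl i))
          = ∑ j : Fin n, ((2:ℝ)^(-(t * s j)) * (q j : ℝ)) * (-((2:ℝ)^(t * s j) * A i j)) := by
        rfl
      rw [e2, e3]
      have e4 : φ (Sum.inl i) * (2:ℝ)^(-(t * r i))
          = ∑ j, A i j * (q j : ℝ) - (p i : ℝ) := by
        simp only [hφ, Sum.elim_inl]
        rw [mul_comm ((2:ℝ)^(t * r i)) _, mul_assoc, ← Real.rpow_add (by norm_num)]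
        simp
      have e5 : ∀ j, ((2:ℝ)^(-(t * s j)) * (q j : ℝ)) * (-((2:ℝ)^(t * s j) * A i j))
          = -(A i j * (q j : ℝ)) := by
        intro j
        have : (2:ℝ)^(-(t * s j)) * (2:ℝ)^(t * s j) = 1 := by
          rw [← Real.rpow_add (by norm_num)]; simp
        calc ((2:ℝ)^(-(t * s j)) * (q j : ℝ)) * (-((2:ℝ)^(t * s j) * A i j))
            = -(((2:ℝ)^(-(t * s j)) * (2:ℝ)^(t * s j)) * (A i j * (q j : ℝ))) := by ring
          _ = -(A i j * (q j : ℝ)) := by rw [this]; ring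
      rw [e4, Finset.sum_congr rfl fun j _ => e5 j]
      simp only [hψ, Sum.elim_inl]
      push_cast
      rw [Finset.sum_neg_distrib]
      ring
    | inr j =>
      have e1 : (∑ i' : Fin m, φ (Sum.inl i') * M (Sum.inl i') (Sum.inr j)) = 0 := by
        apply Finset.sum_eq_zero
        intro i' _
        have : M (Sum.inl i') (Sum.inr j) = 0 := rfl
        rw [this, mul_zero]
      have e2 : (∑ j' : Fin n, φ (Sum.inr j') * M (Sum.inr j') (Sum.inr j))
          = φ (Sum.inr j) * (2:ℝ)^(t * s j) := by
        have e1' : ∀ j' : Fin n, φ (Sum.inr j') * M (Sum.inr j') (Sum.inr j)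
            = φ (Sum.inr j') * (Matrix.diagonal fun j => (2:ℝ)^(t * s j)) j' j := by
          intro j'; rfl
        rw [Finset.sum_congr rfl fun j' _ => e1' j']
        rw [Finset.sum_eq_single j]
        · simp [Matrix.diagonal_apply_eq]
        · intro b _ hb; simp [Matrix.diagonal_apply_ne _ hb]
        · intro h; exact absurd (Finset.mem_univ j) h
      rw [e1, e2, zero_add]
      simp only [hφ, Sum.elim_inr, hψ]
      rw [mul_comm ((2:ℝ)^(-(t * s j))) _, mul_assoc, ← Real.rpow_add (by norm_num)]
      simp
  -- bounds on φ
  have hφbound : ∀ k, |φ k| ≤ ρ := by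
    intro k
    cases k with
    | inl i =>
      have := h1 i
      simp only [hφ, Sum.elim_inl, abs_mul]
      rwa [abs_of_nonneg (le_of_lt (Real.rpow_pos_of_pos (by norm_num) _))]
    | inr j =>
      have := h2 j
      simp only [hφ, Sum.elim_inr, abs_mul]
      rwa [abs_of_nonneg (le_of_lt (Real.rpow_pos_of_pos (by norm_num) _))]
  -- choose the maximizing index
  obtain ⟨k₀, -, hmax⟩ := Finset.exists_max_image (Finset.univ : Finset (Fin m ⊕ Fin n))
    (fun k => |φ k|) ⟨Sum.inl ⟨0, hm⟩, Finset.mem_univ _⟩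
  have hmax' : ∀ k, |φ k| ≤ |φ k₀| := fun k => hmax k (Finset.mem_univ k)
  have hk₀ : φ k₀ ≠ 0 := by
    obtain ⟨j₀, hj₀⟩ : ∃ j₀, q j₀ ≠ 0 := by
      by_contra h
      push_neg at h
      exact hq (funext h)
    have h1' : (0:ℝ) < |φ (Sum.inr j₀)| := by
      simp only [hφ, Sum.elim_inr, abs_mul]
      apply mul_pos
      · rw [abs_of_nonneg (le_of_lt (Real.rpow_pos_of_pos (by norm_num) _))]
        exact Real.rpow_pos_of_pos (by norm_num) _
      · simp only [abs_pos, ne_eq, Int.cast_eq_zero]; exact hj₀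
    have := lt_of_lt_of_le h1' (hmax' (Sum.inr j₀))
    exact fun h => by rw [h, abs_zero] at this; exact lt_irrefl 0 this
  have hφk₀pos : 0 < |φ k₀| := abs_pos.mpr hk₀
  -- μ
  set μ : ℝ := ((2:ℝ)^d * ρ) ^ ((D:ℝ))⁻¹ with hμ
  have hμpos : 0 < μ := Real.rpow_pos_of_pos (by positivity) _
  have hμD : μ ^ D = (2:ℝ)^d * ρ := by
    rw [hμ]
    exact Real.rpow_inv_natCast_pow (by positivity) (by omega)
  have hvol : 2 * |φ k₀| < μ ^ (Fintype.card (Fin m ⊕ Fin n) - 1) := by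
    rw [hcard, ← hD, hμD]
    calc 2 * |φ k₀| ≤ 2 * ρ := by
          exact mul_le_mul_of_nonneg_left (le_trans (hmax' k₀) (hφbound k₀)) (by norm_num)
      _ < (2:ℝ)^d * ρ := by
          apply mul_lt_mul_of_pos_right _ hρ
          calc (2:ℝ) = 2^1 := (pow_one 2).symm
            _ < 2^d := by
                apply pow_lt_pow_right₀ (by norm_num)
                omega
  obtain ⟨x, hx0, hxk, hxk₀⟩ := core_lattice M hdet φ ψ hφψ k₀ hk₀ μ hμpos hvol
  -- uniform bound c on all the coordinates of M.mulVec x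
  have hcpos : 0 < c := by
    rw [hcdef]
    positivity
  have h1D : (1:ℝ) ≤ (D:ℝ) := by exact_mod_cast hD1
  have hμc : μ ≤ c := by
    rw [hcdef]
    nlinarith [hμpos, h1D]
  have hall : ∀ k, |(M.mulVec (fun i => (x i : ℝ))) k| ≤ c := by
    intro k
    by_cases hkk : k = k₀
    · subst hkk
      have h2' : ∑ k' ∈ Finset.univ.erase k, |φ k'| * μ ≤ (D:ℝ) * (|φ k| * μ) := by
        calc ∑ k' ∈ Finset.univ.erase k, |φ k'| * μ
            ≤ ∑ _k' ∈ Finset.univ.erase k, |φ k| * μ := by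
              apply Finset.sum_le_sum
              intro k' _
              exact mul_le_mul_of_nonneg_right (hmax' k') (le_of_lt hμpos)
          _ = (D:ℝ) * (|φ k| * μ) := by
              rw [Finset.sum_const, Finset.card_erase_of_mem (Finset.mem_univ k),
                Finset.card_univ, hcard, nsmul_eq_mul, ← hD]
      have h3 := le_trans hxk₀ h2'
      have hres : |(M.mulVec (fun i => (x i : ℝ))) k| ≤ (D:ℝ) * μ := by
        rw [show (D:ℝ) * (|φ k| * μ) = |φ k| * ((D:ℝ) * μ) from by ring] at h3
        exact le_of_mul_le_mul_left h3 hφk₀pos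
      calc |(M.mulVec (fun i => (x i : ℝ))) k| ≤ (D:ℝ) * μ := hres
        _ = c := by rw [hcdef]
    · calc |(M.mulVec (fun i => (x i : ℝ))) k| ≤ μ := hxk k hkk
        _ ≤ c := hμc
  -- translate the components
  set p' : Fin m → ℤ := fun i => x (Sum.inl i) with hp'
  set q' : Fin n → ℤ := fun j => x (Sum.inr j) with hq'
  have hMx1 : ∀ i, (M.mulVec (fun i => (x i : ℝ))) (Sum.inl i)
      = (2:ℝ)^(-(t * r i)) * (p' i : ℝ) := by
    intro i
    show dotProduct (M (Sum.inl i)) _ = _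
    rw [dotProduct, Fintype.sum_sum_type]
    have e1 : (∑ j : Fin n, M (Sum.inl i) (Sum.inr j) * (x (Sum.inr j) : ℝ)) = 0 := by
      apply Finset.sum_eq_zero
      intro j _
      have : M (Sum.inl i) (Sum.inr j) = 0 := rfl
      rw [this, zero_mul]
    rw [e1, add_zero]
    rw [Finset.sum_eq_single i]
    · show (Matrix.diagonal fun i => (2:ℝ)^(-(t * r i))) i i * _ = _
      simp [Matrix.diagonal_apply_eq, hp']
    · intro b _ hb
      show (Matrix.diagonal fun i => (2:ℝ)^(-(t * r i))) i b * _ = 0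
      simp [Matrix.diagonal_apply_ne _ (Ne.symm hb)]
    · intro h; exact absurd (Finset.mem_univ i) h
  have hMx2 : ∀ j, (M.mulVec (fun i => (x i : ℝ))) (Sum.inr j)
      = (2:ℝ)^(t * s j) * ((q' j : ℝ) - ∑ i, A i j * (p' i : ℝ)) := by
    intro j
    show dotProduct (M (Sum.inr j)) _ = _
    rw [dotProduct, Fintype.sum_sum_type]
    have e1 : (∑ i : Fin m, M (Sum.inr j) (Sum.inl i) * (x (Sum.inl i) : ℝ))
        = -((2:ℝ)^(t * s j)) * ∑ i, A i j * (p' i : ℝ) := by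
      rw [Finset.mul_sum]
      apply Finset.sum_congr rfl
      intro i _
      have : M (Sum.inr j) (Sum.inl i) = -((2:ℝ)^(t * s j) * A i j) := rfl
      rw [this]; ring
    have e2 : (∑ j' : Fin n, M (Sum.inr j) (Sum.inr j') * (x (Sum.inr j') : ℝ))
        = (2:ℝ)^(t * s j) * (q' j : ℝ) := by
      rw [Finset.sum_eq_single j]
      · show (Matrix.diagonal fun j => (2:ℝ)^(t * s j)) j j * _ = _
        simp [Matrix.diagonal_apply_eq, hq']
      · intro b _ hb
        show (Matrix.diagonal fun j => (2:ℝ)^(t * s j)) j b * _ = 0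
        simp [Matrix.diagonal_apply_ne _ (Ne.symm hb)]
      · intro h; exact absurd (Finset.mem_univ j) h
    rw [e1, e2]; ring
  -- p' is nonzero
  have hp'0 : p' ≠ 0 := by
    intro hp'eq
    apply hx0
    funext k
    cases k with
    | inl i =>
      have : p' i = 0 := by rw [hp'eq]; rfl
      simpa [hp'] using this
    | inr j =>
      have hb := hall (Sum.inr j)
      rw [hMx2 j] at hb
      have hpz : ∑ i, A i j * (p' i : ℝ) = 0 := by
        apply Finset.sum_eq_zero
        intro i _
        have : p' i = 0 := by rw [hp'eq]; rfl
        rw [this]; simp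
      rw [hpz, sub_zero, abs_mul] at hb
      have h2s : (1:ℝ) ≤ (2:ℝ)^(t * s j) := Real.one_le_rpow (by norm_num)
        (mul_nonneg ht (le_of_lt (hspos j)))
      have : |(q' j : ℝ)| < 1 := by
        rw [abs_of_nonneg (by linarith : (0:ℝ) ≤ (2:ℝ)^(t * s j))] at hb
        nlinarith [abs_nonneg ((q' j : ℝ))]
      have : q' j = 0 := by
        have h' : |q' j| < 1 := by exact_mod_cast this
        exact Int.abs_lt_one_iff.mp h'
      simpa [hq'] using this
  refine ⟨p', q', hp'0, ?_, ?_⟩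
  · intro i
    have hb := hall (Sum.inl i)
    rw [hMx1 i, abs_mul,
      abs_of_nonneg (le_of_lt (Real.rpow_pos_of_pos (by norm_num) (-(t * r i))))] at hb
    have h2r : (0:ℝ) < (2:ℝ)^(t * r i) := Real.rpow_pos_of_pos (by norm_num) _
    have hinv : (2:ℝ)^(-(t * r i)) * (2:ℝ)^(t * r i) = 1 := by
      rw [← Real.rpow_add (by norm_num)]; simp
    calc |(p' i : ℝ)| = ((2:ℝ)^(-(t * r i)) * |(p' i : ℝ)|) * (2:ℝ)^(t * r i) := by
          rw [mul_assoc, mul_comm (|(p' i : ℝ)|), ← mul_assoc, hinv, one_mul]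
      _ ≤ c * (2:ℝ)^(t * r i) := by
          exact mul_le_mul_of_nonneg_right hb (le_of_lt h2r)
  · intro j
    have hb := hall (Sum.inr j)
    rw [hMx2 j, abs_mul,
      abs_of_nonneg (le_of_lt (Real.rpow_pos_of_pos (by norm_num) (t * s j)))] at hb
    have h2r : (0:ℝ) < (2:ℝ)^(-(t * s j)) := Real.rpow_pos_of_pos (by norm_num) _
    have hinv : (2:ℝ)^(-(t * s j)) * (2:ℝ)^(t * s j) = 1 := by
      rw [← Real.rpow_add (by norm_num)]; simp
    have habs : |∑ i, A i j * (p' i : ℝ) - (q' j : ℝ)| = |(q' j : ℝ) - ∑ i, A i j * (p' i : ℝ)| :=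
      abs_sub_comm _ _
    calc |∑ i, A i j * (p' i : ℝ) - (q' j : ℝ)|
        = (2:ℝ)^(-(t * s j)) * ((2:ℝ)^(t * s j) * |(q' j : ℝ) - ∑ i, A i j * (p' i : ℝ)|) := by
          rw [habs, ← mul_assoc, hinv, one_mul]
      _ ≤ (2:ℝ)^(-(t * s j)) * c := by
          exact mul_le_mul_of_nonneg_left hb (le_of_lt h2r)
      _ = c * (2:ℝ)^(-(t * s j)) := mul_comm _ _


section QnormLemmas


variable {k : ℕ} (hk : 0 < k) (w : Fin k → ℝ)

lemma qnorm_nonneg (x : Fin k → ℝ) : 0 ≤ qnorm hk w x := by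
  obtain ⟨i⟩ := Fin.pos_iff_nonempty.mp hk
  rw [qnorm]
  exact le_trans (Real.rpow_nonneg (abs_nonneg (x i)) ((w i)⁻¹))
    (Finset.le_sup' (fun i => |x i| ^ (w i)⁻¹) (Finset.mem_univ i))

lemma qnorm_zero (hw : ∀ i, 0 < w i) : qnorm hk w (fun _ => 0) = 0 := by
  rw [qnorm]
  rw [show (fun i => |(0:ℝ)| ^ (w i)⁻¹) = fun _ => (0:ℝ) from funext fun i => by
    rw [abs_zero, Real.zero_rpow (inv_ne_zero (ne_of_gt (hw i)))]]
  exact Finset.sup'_const _ _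

lemma one_le_qnorm_int (hw : ∀ i, 0 < w i) (x : Fin k → ℤ) (hx : x ≠ 0) :
    1 ≤ qnorm hk w (fun i => (x i : ℝ)) := by
  obtain ⟨i, hi⟩ : ∃ i, x i ≠ 0 := by
    by_contra h; push_neg at h; exact hx (funext h)
  have h1 : (1:ℝ) ≤ |(x i : ℝ)| := by
    rw [← Int.cast_abs]
    exact_mod_cast Int.one_le_abs hi
  rw [qnorm]
  calc (1:ℝ) ≤ |(x i : ℝ)| ^ (w i)⁻¹ :=
        Real.one_le_rpow h1 (le_of_lt (inv_pos.mpr (hw i)))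
    _ ≤ _ := Finset.le_sup' (fun i => |(x i : ℝ)| ^ (w i)⁻¹) (Finset.mem_univ i)

lemma idist_le_qnorm (x : Fin k → ℝ) (p : Fin k → ℤ) :
    idist hk w x ≤ qnorm hk w (fun i => x i - (p i : ℝ)) := by
  apply ciInf_le
  exact ⟨0, fun y hy => by obtain ⟨p', rfl⟩ := hy; exact qnorm_nonneg hk w _⟩

lemma abs_lt_of_qnorm_lt {x : Fin k → ℝ} {c : ℝ} (hc : 0 < c) (hw : ∀ i, 0 < w i)
    (h : qnorm hk w x < c) (i : Fin k) : |x i| < c ^ (w i) := by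
  rw [qnorm] at h
  have h1 : |x i| ^ (w i)⁻¹ < c :=
    lt_of_le_of_lt (Finset.le_sup' (fun i => |x i| ^ (w i)⁻¹) (Finset.mem_univ i)) h
  have := Real.rpow_lt_rpow (Real.rpow_nonneg (abs_nonneg _) _) h1 (hw i)
  rwa [Real.rpow_inv_rpow (abs_nonneg _) (ne_of_gt (hw i))] at this

lemma qnorm_lt_of_abs_le {x : Fin k → ℝ} {c b : ℝ} (hw : ∀ i, 0 < w i) (hw1 : ∀ i, w i ≤ 1)
    (hc : 0 < c) (hc1 : c < 1) (hb : 0 < b)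
    (h : ∀ i, |x i| ≤ c * b ^ (w i)) : qnorm hk w x ≤ c * b := by
  rw [qnorm, Finset.sup'_le_iff]
  intro i _
  calc |x i| ^ (w i)⁻¹ ≤ (c * b ^ (w i)) ^ (w i)⁻¹ :=
        Real.rpow_le_rpow (abs_nonneg _) (h i) (le_of_lt (inv_pos.mpr (hw i)))
    _ = c ^ (w i)⁻¹ * b := by
        rw [Real.mul_rpow (le_of_lt hc) (Real.rpow_nonneg (le_of_lt hb) _),
          Real.rpow_rpow_inv (le_of_lt hb) (ne_of_gt (hw i))]
    _ ≤ c * b := by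
        apply mul_le_mul_of_nonneg_right _ (le_of_lt hb)
        calc c ^ (w i)⁻¹ ≤ c ^ (1:ℝ) :=
              Real.rpow_le_rpow_of_exponent_ge hc (le_of_lt hc1)
                (one_le_inv_iff₀.mpr ⟨hw i, hw1 i⟩)
          _ = c := Real.rpow_one c

end QnormLemmas

/-- One good level for `A` gives a good level (shifted by `K`) for `Aᵀ`. -/
lemma good_step {m n : ℕ} (hm : 0 < m) (hn : 0 < n)
    (r : Fin m → ℝ) (s : Fin n → ℝ)
    (hrpos : ∀ i, 0 < r i) (hspos : ∀ j, 0 < s j)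
    (hrsum : ∑ i, r i = 1) (hssum : ∑ j, s j = 1)
    (A : Matrix (Fin m) (Fin n) ℝ)
    (ε' : ℝ) (hε' : 0 < ε') (K : ℕ)
    (c₀ : ℝ) (hc₀pos : 0 < c₀) (hc₀r : ∀ i, c₀ ≤ r i) (hc₀s : ∀ j, c₀ ≤ s j)
    (hcK : ((m+n-1 : ℕ) : ℝ) *
      ((2:ℝ)^(m+n) * (2:ℝ)^(-((K:ℝ) * c₀))) ^ (((m+n-1 : ℕ):ℝ))⁻¹ < min ε' 1)
    (l : ℕ) (hl : 1 ≤ l)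
    (hgood : ∃ q : Fin n → ℤ,
      idist hm r (fun i => ∑ j, A i j * (q j : ℝ)) < (2:ℝ)^(-(2*(K:ℝ))) * 2 ^ (-(l:ℝ)) ∧
      0 < qnorm hn s (fun j => (q j : ℝ)) ∧
      qnorm hn s (fun j => (q j : ℝ)) < 2 ^ ((l:ℝ))) :
    ∃ p' : Fin m → ℤ,
      idist hn s (fun j => ∑ i, A.transpose j i * (p' i : ℝ)) < ε' * 2 ^ (-(((l+K:ℕ)):ℝ)) ∧
      0 < qnorm hm r (fun i => (p' i : ℝ)) ∧
      qnorm hm r (fun i => (p' i : ℝ)) < 2 ^ ((((l+K:ℕ)):ℝ)) := by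
  obtain ⟨q, hidist, hqpos, hqlt⟩ := hgood
  -- weights are at most 1
  have hr1 : ∀ i, r i ≤ 1 := by
    intro i
    calc r i ≤ ∑ i', r i' :=
          Finset.single_le_sum (fun i' _ => le_of_lt (hrpos i')) (Finset.mem_univ i)
      _ = 1 := hrsum
  have hs1 : ∀ j, s j ≤ 1 := by
    intro j
    calc s j ≤ ∑ j', s j' :=
          Finset.single_le_sum (fun j' _ => le_of_lt (hspos j')) (Finset.mem_univ j)
      _ = 1 := hssum
  -- q ≠ 0
  have hq0 : q ≠ 0 := by
    intro h
    rw [h] at hqpos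
    have : qnorm hn s (fun j => ((0 : Fin n → ℤ) j : ℝ)) = 0 := by
      rw [show (fun j => ((0 : Fin n → ℤ) j : ℝ)) = (fun _ => (0:ℝ)) from funext fun j => by simp]
      exact qnorm_zero hn s hspos
    rw [this] at hqpos
    exact lt_irrefl 0 hqpos
  -- extract p
  obtain ⟨p, hp⟩ := exists_lt_of_ciInf_lt hidist
  have hεl : (0:ℝ) < (2:ℝ)^(-(2*(K:ℝ))) * 2 ^ (-(l:ℝ)) :=
    mul_pos (Real.rpow_pos_of_pos (by norm_num) _) (Real.rpow_pos_of_pos (by norm_num) _)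
  have hcomp1 : ∀ i, |∑ j, A i j * (q j : ℝ) - (p i : ℝ)|
      < ((2:ℝ)^(-(2*(K:ℝ))) * 2 ^ (-(l:ℝ))) ^ (r i) :=
    fun i => abs_lt_of_qnorm_lt hm r hεl hrpos hp i
  have hcomp2 : ∀ j, |(q j : ℝ)| < ((2:ℝ) ^ ((l:ℝ))) ^ (s j) :=
    fun j => abs_lt_of_qnorm_lt hn s (Real.rpow_pos_of_pos (by norm_num) _) hspos hqlt j
  -- set up parameters
  set t : ℝ := (l:ℝ) + (K:ℝ) with hT
  have ht : 0 ≤ t := by positivity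
  set ρ : ℝ := (2:ℝ)^(-((K:ℝ) * c₀)) with hρdef
  have hρ : 0 < ρ := Real.rpow_pos_of_pos (by norm_num) _
  set c : ℝ := ((m+n-1 : ℕ) : ℝ) * ((2:ℝ)^(m+n) * ρ) ^ (((m+n-1 : ℕ):ℝ))⁻¹ with hcdef
  have hcmin : c < min ε' 1 := hcK
  have hc1 : c < 1 := lt_of_lt_of_le hcmin (min_le_right _ _)
  have hcε' : c < ε' := lt_of_lt_of_le hcmin (min_le_left _ _)
  have hcpos : 0 < c := by
    rw [hcdef]
    apply mul_pos
    · exact_mod_cast (by omega : 0 < m + n - 1)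
    · exact Real.rpow_pos_of_pos (by positivity) _
  -- hypotheses of dual_exists
  have h1 : ∀ i, (2:ℝ)^(t * r i) * |∑ j, A i j * (q j : ℝ) - (p i : ℝ)| ≤ ρ := by
    intro i
    have e1 : (2:ℝ)^(-(2*(K:ℝ))) * 2 ^ (-(l:ℝ)) = (2:ℝ)^(-(2*(K:ℝ)) + -(l:ℝ)) :=
      (Real.rpow_add (by norm_num) _ _).symm
    have e2 : ((2:ℝ)^(-(2*(K:ℝ)) + -(l:ℝ))) ^ (r i) = (2:ℝ)^((-(2*(K:ℝ)) + -(l:ℝ)) * r i) :=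
      (Real.rpow_mul (by norm_num) _ _).symm
    have key : (2:ℝ)^(t * r i) * ((2:ℝ)^(-(2*(K:ℝ))) * 2 ^ (-(l:ℝ))) ^ (r i) ≤ ρ := by
      rw [e1, e2, ← Real.rpow_add (by norm_num)]
      rw [hρdef]
      apply Real.rpow_le_rpow_of_exponent_le (by norm_num)
      have : t * r i + (-(2*(K:ℝ)) + -(l:ℝ)) * r i = -((K:ℝ) * r i) := by
        rw [hT]; ring
      rw [this]
      have := hc₀r i
      nlinarith [(Nat.cast_nonneg K : (0:ℝ) ≤ (K:ℝ))]
    calc (2:ℝ)^(t * r i) * |∑ j, A i j * (q j : ℝ) - (p i : ℝ)|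
        ≤ (2:ℝ)^(t * r i) * ((2:ℝ)^(-(2*(K:ℝ))) * 2 ^ (-(l:ℝ))) ^ (r i) :=
          mul_le_mul_of_nonneg_left (le_of_lt (hcomp1 i))
            (le_of_lt (Real.rpow_pos_of_pos (by norm_num) _))
      _ ≤ ρ := key
  have h2 : ∀ j, (2:ℝ)^(-(t * s j)) * |(q j : ℝ)| ≤ ρ := by
    intro j
    have e2 : ((2:ℝ)^((l:ℝ))) ^ (s j) = (2:ℝ)^((l:ℝ) * s j) :=
      (Real.rpow_mul (by norm_num) _ _).symm
    have key : (2:ℝ)^(-(t * s j)) * ((2:ℝ)^((l:ℝ))) ^ (s j) ≤ ρ := by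
      rw [e2, ← Real.rpow_add (by norm_num), hρdef]
      apply Real.rpow_le_rpow_of_exponent_le (by norm_num)
      have : -(t * s j) + (l:ℝ) * s j = -((K:ℝ) * s j) := by rw [hT]; ring
      rw [this]
      have := hc₀s j
      nlinarith [(Nat.cast_nonneg K : (0:ℝ) ≤ (K:ℝ))]
    calc (2:ℝ)^(-(t * s j)) * |(q j : ℝ)|
        ≤ (2:ℝ)^(-(t * s j)) * ((2:ℝ)^((l:ℝ))) ^ (s j) :=
          mul_le_mul_of_nonneg_left (le_of_lt (hcomp2 j))
            (le_of_lt (Real.rpow_pos_of_pos (by norm_num) _))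
      _ ≤ ρ := key
  obtain ⟨p', q', hp'0, hb1, hb2⟩ := dual_exists hm hn r s hrpos hspos hrsum hssum A t ht
    ρ hρ q p hq0 h1 h2 c hcdef hc1
  have hcast : (((l+K:ℕ)):ℝ) = t := by rw [hT]; push_cast; ring
  refine ⟨p', ?_, ?_, ?_⟩
  · -- the idist bound
    have hq1 : ∀ j, |(fun j => ∑ i, A.transpose j i * (p' i : ℝ)) j - (q' j : ℝ)|
        ≤ c * ((2:ℝ)^(-t)) ^ (s j) := by
      intro j
      have e1 : ((2:ℝ)^(-t)) ^ (s j) = (2:ℝ)^(-(t * s j)) := by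
        rw [← Real.rpow_mul (by norm_num)]
        ring_nf
      rw [e1]
      simp only [Matrix.transpose_apply]
      exact hb2 j
    have hqn := qnorm_lt_of_abs_le hn s hspos hs1 hcpos hc1
      (Real.rpow_pos_of_pos (by norm_num) (-t)) hq1
    calc idist hn s (fun j => ∑ i, A.transpose j i * (p' i : ℝ))
        ≤ qnorm hn s (fun j => (fun j => ∑ i, A.transpose j i * (p' i : ℝ)) j - (q' j : ℝ)) :=
          idist_le_qnorm hn s _ q'
      _ ≤ c * (2:ℝ)^(-t) := hqn
      _ < ε' * 2 ^ (-(((l+K:ℕ)):ℝ)) := by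
          rw [hcast]
          exact mul_lt_mul_of_pos_right hcε' (Real.rpow_pos_of_pos (by norm_num) _)
  · exact lt_of_lt_of_le one_pos (one_le_qnorm_int hm r hrpos p' hp'0)
  · have hq1 : ∀ i, |(p' i : ℝ)| ≤ c * ((2:ℝ)^t) ^ (r i) := by
      intro i
      have e1 : ((2:ℝ)^t) ^ (r i) = (2:ℝ)^(t * r i) := by
        rw [← Real.rpow_mul (by norm_num)]
      rw [e1]
      exact hb1 i
    have hqn := qnorm_lt_of_abs_le hm r hrpos hr1 hcpos hc1
      (Real.rpow_pos_of_pos (by norm_num) t) hq1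
    calc qnorm hm r (fun i => (p' i : ℝ)) ≤ c * (2:ℝ)^t := hqn
      _ < 1 * (2:ℝ)^t := mul_lt_mul_of_pos_right hc1 (Real.rpow_pos_of_pos (by norm_num) _)
      _ = 2 ^ ((((l+K:ℕ)):ℝ)) := by rw [one_mul, hcast]


/-- Transferring a density-one set of good levels through a shift by `K`. -/
lemma density_transfer {P Q : ℕ → Prop} (K : ℕ)
    (hstep : ∀ l, 1 ≤ l → P l → Q (l + K))
    (h : Filter.Tendsto (fun N : ℕ => (({l : ℕ | 1 ≤ l ∧ l ≤ N ∧ P l}.ncard : ℝ)) / N)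
      Filter.atTop (𝓝 1)) :
    Filter.Tendsto (fun N : ℕ => (({l : ℕ | 1 ≤ l ∧ l ≤ N ∧ Q l}.ncard : ℝ)) / N)
      Filter.atTop (𝓝 1) := by
  classical
  set SA : ℕ → Set ℕ := fun N => {l : ℕ | 1 ≤ l ∧ l ≤ N ∧ P l} with hSA
  set SB : ℕ → Set ℕ := fun N => {l : ℕ | 1 ≤ l ∧ l ≤ N ∧ Q l} with hSB
  have hfin : ∀ (R : ℕ → Prop) (N : ℕ), {l : ℕ | 1 ≤ l ∧ l ≤ N ∧ R l}.Finite := by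
    intro R N
    apply (Set.finite_Icc 1 N).subset
    intro l hl
    exact Set.mem_Icc.mpr ⟨hl.1, hl.2.1⟩
  have hfinA : ∀ N, (SA N).Finite := fun N => hfin P N
  have hfinB : ∀ N, (SB N).Finite := fun N => hfin Q N
  -- counting inequalities
  have key1 : ∀ N : ℕ, (SA (N - K)).ncard ≤ (SB N).ncard := by
    intro N
    have himg : (fun l => l + K) '' (SA (N - K)) ⊆ SB N := by
      rintro x ⟨l, ⟨hl1, hl2, hl3⟩, rfl⟩
      show l + K ∈ SB N
      exact ⟨by omega, by omega, hstep l hl1 hl3⟩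
    calc (SA (N - K)).ncard = ((fun l => l + K) '' (SA (N - K))).ncard :=
          (Set.ncard_image_of_injective _ (add_left_injective K)).symm
      _ ≤ (SB N).ncard := Set.ncard_le_ncard himg (hfinB N)
  have key2 : ∀ N : ℕ, (SA N).ncard ≤ (SA (N - K)).ncard + K := by
    intro N
    have hsub : SA N ⊆ SA (N - K) ∪ Set.Ioc (N - K) N := by
      rintro l ⟨hl1, hl2, hl3⟩
      by_cases hc : l ≤ N - K
      · exact Or.inl ⟨hl1, hc, hl3⟩
      · exact Or.inr ⟨by omega, hl2⟩
    calc (SA N).ncard ≤ (SA (N - K) ∪ Set.Ioc (N - K) N).ncard :=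
          Set.ncard_le_ncard hsub ((hfinA _).union (Set.finite_Ioc _ _))
      _ ≤ (SA (N - K)).ncard + (Set.Ioc (N - K) N).ncard := Set.ncard_union_le _ _
      _ ≤ (SA (N - K)).ncard + K := by
          have : (Set.Ioc (N - K) N).ncard = N - (N - K) := by
            rw [← Finset.coe_Ioc, Set.ncard_coe_finset, Nat.card_Ioc]
          omega
  have key3 : ∀ N : ℕ, (SB N).ncard ≤ N := by
    intro N
    calc (SB N).ncard ≤ (Set.Icc 1 N).ncard := by
          apply Set.ncard_le_ncard _ (Set.finite_Icc 1 N)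
          intro l hl; exact Set.mem_Icc.mpr ⟨hl.1, hl.2.1⟩
      _ = N := by rw [← Finset.coe_Icc, Set.ncard_coe_finset, Nat.card_Icc]; omega
  -- squeeze
  have hlow : Filter.Tendsto (fun N : ℕ => ((SA N).ncard : ℝ) / N - (K : ℝ) / N)
      Filter.atTop (𝓝 1) := by
    have := h.sub (tendsto_const_div_atTop_nhds_zero_nat (K : ℝ))
    simpa using this
  apply tendsto_of_tendsto_of_tendsto_of_le_of_le' hlow tendsto_const_nhds
  · filter_upwards [Filter.eventually_ge_atTop 1] with N hN
    have hNpos : (0:ℝ) < (N:ℝ) := by exact_mod_cast hN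
    have hcount : ((SA N).ncard : ℝ) ≤ ((SB N).ncard : ℝ) + K := by
      have h1 := key1 N
      have h2 := key2 N
      have : (SA N).ncard ≤ (SB N).ncard + K := by omega
      exact_mod_cast this
    rw [← sub_div, div_le_div_iff₀ hNpos hNpos]
    nlinarith [hcount]
  · filter_upwards [Filter.eventually_ge_atTop 1] with N hN
    have hNpos : (0:ℝ) < (N:ℝ) := by exact_mod_cast hN
    rw [div_le_one hNpos]
    exact_mod_cast key3 N

/-- One direction of the transference. -/
lemma soa_transfer {m n : ℕ} (hm : 0 < m) (hn : 0 < n)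
    (r : Fin m → ℝ) (s : Fin n → ℝ)
    (hrpos : ∀ i, 0 < r i) (hspos : ∀ j, 0 < s j)
    (hrsum : ∑ i, r i = 1) (hssum : ∑ j, s j = 1)
    (A : Matrix (Fin m) (Fin n) ℝ) :
    SingularOnAverage hm hn r s A → SingularOnAverage hn hm s r A.transpose := by
  intro h ε' hε'
  classical
  -- the minimum weight
  have hnem : (Finset.univ : Finset (Fin m)).Nonempty := ⟨⟨0, hm⟩, Finset.mem_univ _⟩
  have hnen : (Finset.univ : Finset (Fin n)).Nonempty := ⟨⟨0, hn⟩, Finset.mem_univ _⟩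
  set c₀ : ℝ := min (Finset.univ.inf' hnem r) (Finset.univ.inf' hnen s) with hc₀
  have hc₀pos : 0 < c₀ := by
    rw [hc₀, lt_min_iff]
    exact ⟨(Finset.lt_inf'_iff _).mpr fun i _ => hrpos i,
      (Finset.lt_inf'_iff _).mpr fun j _ => hspos j⟩
  have hc₀r : ∀ i, c₀ ≤ r i := fun i =>
    le_trans (min_le_left _ _) (Finset.inf'_le _ (Finset.mem_univ i))
  have hc₀s : ∀ j, c₀ ≤ s j := fun j =>
    le_trans (min_le_right _ _) (Finset.inf'_le _ (Finset.mem_univ j))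
  -- choose the shift K
  set D' : ℝ := ((m+n-1 : ℕ) : ℝ) with hD'
  have hD'pos : (0:ℝ) < D' := by
    rw [hD']; exact_mod_cast (by omega : 0 < m+n-1)
  set dd : ℝ := (((m+n-1:ℕ):ℝ))⁻¹ with hdd
  have hddpos : 0 < dd := by rw [hdd]; exact inv_pos.mpr hD'pos
  set a : ℝ := (2:ℝ) ^ (-(c₀ * dd)) with ha
  have ha1 : a < 1 := Real.rpow_lt_one_of_one_lt_of_neg (by norm_num) (by nlinarith)
  have hapos : 0 < a := Real.rpow_pos_of_pos (by norm_num) _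
  set C : ℝ := D' * (2:ℝ) ^ (((m+n:ℕ):ℝ) * dd) with hC
  have hCpos : 0 < C := mul_pos hD'pos (Real.rpow_pos_of_pos (by norm_num) _)
  have htargetpos : 0 < min ε' 1 := lt_min hε' one_pos
  obtain ⟨K, hK⟩ := exists_pow_lt_of_lt_one (div_pos htargetpos hCpos) ha1
  have hcK : ((m+n-1 : ℕ) : ℝ) *
      ((2:ℝ)^(m+n) * (2:ℝ)^(-((K:ℝ) * c₀))) ^ (((m+n-1 : ℕ):ℝ))⁻¹ < min ε' 1 := by
    have e : ((2:ℝ)^(m+n) * (2:ℝ)^(-((K:ℝ) * c₀))) ^ dd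
        = (2:ℝ)^(((m+n:ℕ):ℝ) * dd) * a ^ K := by
      rw [← Real.rpow_natCast 2 (m+n), ← Real.rpow_add (by norm_num : (0:ℝ) < 2),
        ← Real.rpow_mul (by norm_num : (0:ℝ) ≤ 2), add_mul,
        Real.rpow_add (by norm_num : (0:ℝ) < 2)]
      congr 1
      rw [ha, ← Real.rpow_natCast ((2:ℝ) ^ (-(c₀ * dd))) K,
        ← Real.rpow_mul (by norm_num : (0:ℝ) ≤ 2)]
      congr 1
      push_cast
      ring
    calc ((m+n-1 : ℕ) : ℝ) * ((2:ℝ)^(m+n) * (2:ℝ)^(-((K:ℝ) * c₀))) ^ (((m+n-1 : ℕ):ℝ))⁻¹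
        = C * a ^ K := by rw [← hdd, ← hD', e, hC]; ring
      _ < C * (min ε' 1 / C) := mul_lt_mul_of_pos_left hK hCpos
      _ = min ε' 1 := by field_simp
  -- apply the hypothesis with the small ε
  set ε : ℝ := (2:ℝ)^(-(2*(K:ℝ))) with hεdef
  have hεpos : 0 < ε := Real.rpow_pos_of_pos (by norm_num) _
  have H := h ε hεpos
  exact density_transfer K
    (fun l hl hgood => good_step hm hn r s hrpos hspos hrsum hssum A ε' hε' K
      c₀ hc₀pos hc₀r hc₀s hcK l hl hgood) H

/-- `A` is singular on average iff `A^T` is singular on average. -/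
theorem singularOnAverage_transpose_iff {m n : ℕ} (hm : 0 < m) (hn : 0 < n)
    (r : Fin m → ℝ) (s : Fin n → ℝ)
    (hrpos : ∀ i, 0 < r i) (hspos : ∀ j, 0 < s j)
    (hrmono : ∀ i i' : Fin m, i ≤ i' → r i' ≤ r i)
    (hsmono : ∀ j j' : Fin n, j ≤ j' → s j' ≤ s j)
    (hrsum : ∑ i, r i = 1) (hssum : ∑ j, s j = 1)
    (A : Matrix (Fin m) (Fin n) ℝ) :
    SingularOnAverage hm hn r s A ↔ SingularOnAverage hn hm s r A.transpose := by
  constructor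
  · exact soa_transfer hm hn r s hrpos hspos hrsum hssum A
  · intro h
    have := soa_transfer hn hm s r hspos hrpos hssum hrsum A.transpose h
    rwa [Matrix.transpose_transpose] at this
end

section
/- Let S > R > 1, and let (Y_i), (M_i) be sequences with Y_i increasing, M_i decreasing, M_i Y_{i+1} ≤ 1 for all i, Y_{i+V} ≥ 2 Y_i for some fixed V ∈ ℕ, and suppose lim_{k→∞} (1/log Y_k)|{i ≤ k : M_i Y_{i+1} > R/S^3}| = 0. Then there exists an increasing function φ: ℤ_{≥1} → ℤ_{≥1} such that for every i ≥ 1: Y_{φ(i+1)} ≥ R Y_{φ(i)} and M_{φ(i)} Y_{φ(i+1)} ≤ R, and moreover limsup_{k→∞} k/log Y_{φ(k)} ≤ 1/log S. -/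
open Filter Topology

set_option maxHeartbeats 2000000

/-- Modified Bugeaud–Laurent subsequence extraction: given sequences `(Y_i)` increasing,
`(M_i)` decreasing with `M_i Y_{i+1} ≤ 1`, doubling `Y_{i+V} ≥ 2Y_i`, and sparsity on
logarithmic average of indices with `M_i Y_{i+1} > R/S³`, there is an increasing `φ`
with `Y_{φ(i+1)} ≥ R Y_{φ(i)}`, `M_{φ(i)} Y_{φ(i+1)} ≤ R`, and
`limsup k / log Y_{φ(k)} ≤ 1/log S`. -/
theorem modified_bugeaud_laurent (R S : ℝ) (hR : 1 < R) (hRS : R < S)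
    (Y M : ℕ → ℝ) (V : ℕ) (hV : 0 < V)
    (hYpos : ∀ k, 0 < Y k) (hMpos : ∀ k, 0 < M k)
    (hYmono : StrictMono Y) (hManti : StrictAnti M)
    (hMY : ∀ i, M i * Y (i + 1) ≤ 1)
    (hdouble : ∀ i, 2 * Y i ≤ Y (i + V))
    (hdensity : Filter.Tendsto (fun k : ℕ =>
        (({i : ℕ | 1 ≤ i ∧ i ≤ k ∧ R / S ^ 3 < M i * Y (i + 1)}.ncard : ℝ) /
          Real.log (Y k)))
      Filter.atTop (𝓝 0)) :
    ∃ φ : ℕ → ℕ, StrictMono φ ∧ (∀ i, 1 ≤ φ i) ∧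
      (∀ i, R * Y (φ i) ≤ Y (φ (i + 1))) ∧
      (∀ i, M (φ i) * Y (φ (i + 1)) ≤ R) ∧
      Filter.limsup (fun k : ℕ => (k : ℝ) / Real.log (Y (φ k))) Filter.atTop ≤
        1 / Real.log S := by
  classical
  have hR0 : (0:ℝ) < R := lt_trans one_pos hR
  have hS1 : (1:ℝ) < S := lt_trans hR hRS
  have hS0 : (0:ℝ) < S := lt_trans one_pos hS1
  have hS3pos : (0:ℝ) < S ^ 3 := pow_pos hS0 3
  have hS3gt1 : (1:ℝ) < S ^ 3 := by
    have h : S ^ 3 = S * S * S := by ring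
    nlinarith
  have hRleS3 : R ≤ S ^ 3 := by
    have h : S ^ 3 = S * S * S := by ring
    nlinarith
  have hlogS : (0:ℝ) < Real.log S := Real.log_pos hS1
  -- Y is unbounded
  have hgrow : ∀ m i, (2:ℝ) ^ m * Y i ≤ Y (i + V * m) := by
    intro m
    induction m with
    | zero => intro i; simp
    | succ m ih =>
      intro i
      have h1 := ih i
      have h2 := hdouble (i + V * m)
      have hidx : i + V * m + V = i + V * (m + 1) := by ring
      rw [hidx] at h2
      have h3 : (2:ℝ) ^ (m+1) * Y i = 2 * ((2:ℝ) ^ m * Y i) := by ring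
      rw [h3]
      linarith
  have hbig : ∀ C : ℝ, ∃ N, ∀ l, N ≤ l → C ≤ Y l := by
    intro C
    obtain ⟨m, hm⟩ := pow_unbounded_of_one_lt (C / Y 0) (by norm_num : (1:ℝ) < 2)
    refine ⟨V * m, fun l hl => ?_⟩
    have h1 : C ≤ 2 ^ m * Y 0 := by
      rw [div_lt_iff₀ (hYpos 0)] at hm
      linarith
    calc C ≤ 2 ^ m * Y 0 := h1
      _ ≤ Y (0 + V * m) := hgrow m 0
      _ ≤ Y l := hYmono.monotone (by omega)
  have hYtend : Tendsto Y atTop atTop := by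
    rw [tendsto_atTop]
    intro C
    obtain ⟨N, hN⟩ := hbig C
    exact eventually_atTop.2 ⟨N, hN⟩
  -- long and short backward target functions
  obtain ⟨Lf, hLfspec, hLfgt⟩ :
      ∃ Lf : ℕ → ℕ, (∀ v, Lf v ≠ 0 → 1 ≤ Lf v ∧ S ^ 3 * Y (Lf v) ≤ Y v) ∧
        (∀ v k, Lf v < k → 1 ≤ k → ¬ S ^ 3 * Y k ≤ Y v) := by
    refine ⟨fun v => Nat.findGreatest (fun l => 1 ≤ l ∧ S ^ 3 * Y l ≤ Y v) v, ?_, ?_⟩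
    · intro v h
      exact Nat.findGreatest_of_ne_zero rfl h
    · intro v k hk h1 hle
      rcases le_or_gt k v with hkv | hkv
      · exact Nat.findGreatest_is_greatest hk hkv ⟨h1, hle⟩
      · have h2 : Y v < Y k := hYmono hkv
        nlinarith [hYpos k]
  obtain ⟨Sf, hSfspec, hSfgt⟩ :
      ∃ Sf : ℕ → ℕ, (∀ v, Sf v ≠ 0 → 1 ≤ Sf v ∧ R * Y (Sf v) ≤ Y v) ∧
        (∀ v k, Sf v < k → 1 ≤ k → ¬ R * Y k ≤ Y v) := by
    refine ⟨fun v => Nat.findGreatest (fun l => 1 ≤ l ∧ R * Y l ≤ Y v) v, ?_, ?_⟩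
    · intro v h
      exact Nat.findGreatest_of_ne_zero rfl h
    · intro v k hk h1 hle
      rcases le_or_gt k v with hkv | hkv
      · exact Nat.findGreatest_is_greatest hk hkv ⟨h1, hle⟩
      · have h2 : Y v < Y k := hYmono hkv
        nlinarith [hYpos k]
  set σf : ℕ → ℕ :=
    fun v => if 0 < Lf v ∧ M (Lf v) * Y (Lf v + 1) ≤ R / S ^ 3 then Lf v else Sf v with hσd
  have hσcases : ∀ v,
      (σf v = Lf v ∧ 0 < Lf v ∧ M (Lf v) * Y (Lf v + 1) ≤ R / S ^ 3) ∨
      (σf v = Sf v ∧ ¬(0 < Lf v ∧ M (Lf v) * Y (Lf v + 1) ≤ R / S ^ 3)) := by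
    intro v
    by_cases hbr : 0 < Lf v ∧ M (Lf v) * Y (Lf v + 1) ≤ R / S ^ 3
    · exact Or.inl ⟨by simp only [hσd]; rw [if_pos hbr], hbr⟩
    · exact Or.inr ⟨by simp only [hσd]; rw [if_neg hbr], hbr⟩
  -- validity of backward steps
  have hvalid : ∀ v, 1 ≤ σf v →
      R * Y (σf v) ≤ Y v ∧ M (σf v) * Y v ≤ R ∧ σf v < v := by
    intro v h1
    rcases hσcases v with ⟨he, _, hgood⟩ | ⟨he, _⟩
    · rw [he] at h1 ⊢
      obtain ⟨hu1, hu2⟩ := hLfspec v (by omega)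
      have hup : Y v < S ^ 3 * Y (Lf v + 1) := by
        by_contra hcon
        push_neg at hcon
        exact hLfgt v (Lf v + 1) (by omega) (by omega) hcon
      refine ⟨?_, ?_, ?_⟩
      · nlinarith [hYpos (Lf v)]
      · have h2 : M (Lf v) * Y v ≤ M (Lf v) * (S ^ 3 * Y (Lf v + 1)) := by
          nlinarith [hMpos (Lf v)]
        have h3 : M (Lf v) * (S ^ 3 * Y (Lf v + 1)) = S ^ 3 * (M (Lf v) * Y (Lf v + 1)) := by
          ring
        have h4 : S ^ 3 * (M (Lf v) * Y (Lf v + 1)) ≤ S ^ 3 * (R / S ^ 3) := by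
          nlinarith
        have h5 : S ^ 3 * (R / S ^ 3) = R := by field_simp
        linarith [h2, h3.le, h4, h5.le]
      · have h6 : Y (Lf v) < Y v := by nlinarith [hYpos (Lf v)]
        exact hYmono.lt_iff_lt.mp h6
    · rw [he] at h1 ⊢
      obtain ⟨hu1, hu2⟩ := hSfspec v (by omega)
      have hup : Y v < R * Y (Sf v + 1) := by
        by_contra hcon
        push_neg at hcon
        exact hSfgt v (Sf v + 1) (by omega) (by omega) hcon
      refine ⟨hu2, ?_, ?_⟩
      · have h2 : M (Sf v) * Y v ≤ M (Sf v) * (R * Y (Sf v + 1)) := by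
          nlinarith [hMpos (Sf v)]
        have h3 : M (Sf v) * (R * Y (Sf v + 1)) = R * (M (Sf v) * Y (Sf v + 1)) := by ring
        have h4 : R * (M (Sf v) * Y (Sf v + 1)) ≤ R * 1 := by
          nlinarith [hMY (Sf v)]
        linarith [h2, h3.le, h4]
      · have h6 : Y (Sf v) < Y v := by nlinarith [hYpos (Sf v)]
        exact hYmono.lt_iff_lt.mp h6
  have hσ0 : σf 0 = 0 := by
    rcases hσcases 0 with ⟨he, hpos, _⟩ | ⟨he, _⟩
    · exfalso
      obtain ⟨_, h2⟩ := hLfspec 0 (by omega)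
      have h3 : Y 0 < Y (Lf 0) := hYmono (by omega)
      nlinarith [hYpos (Lf 0)]
    · rw [he]
      by_contra hne
      obtain ⟨h1, h2⟩ := hSfspec 0 hne
      have h3 : Y 0 < Y (Sf 0) := hYmono (by omega)
      nlinarith [hYpos (Sf 0)]
  have hσlt : ∀ v, 1 ≤ v → σf v < v := by
    intro v hv
    rcases Nat.eq_zero_or_pos (σf v) with h | h
    · omega
    · exact (hvalid v h).2.2
  -- every orbit reaches 0
  have horb : ∀ v, ∃ n, σf^[n] v = 0 := by
    intro v
    induction v using Nat.strong_induction_on with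
    | _ v ih =>
      rcases Nat.eq_zero_or_pos v with h | h
      · exact ⟨0, by simpa [h]⟩
      · obtain ⟨n, hn⟩ := ih (σf v) (hσlt v h)
        exact ⟨n + 1, by rw [Function.iterate_succ_apply, hn]⟩
  set Pers : ℕ → Prop := fun u => ∀ N : ℕ, ∃ v, N ≤ v ∧ ∃ n : ℕ, σf^[n] v = u with hPd
  have hPers0 : Pers 0 := by
    simp only [hPd]
    intro N
    exact ⟨N, le_rfl, horb N⟩
  -- every persistent node has a persistent child
  have hchild : ∀ u, Pers u → ∃ c, σf c = u ∧ u < c ∧ Pers c := by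
    intro u hu
    by_contra hcon
    push_neg at hcon
    have hcb : ∀ c, σf c = u → u < c → Y c < S ^ 3 * Y (u + 1) := by
      intro c h1 h2
      rcases hσcases c with ⟨he, _, _⟩ | ⟨he, _⟩
      · rw [he] at h1
        by_contra hcc
        push_neg at hcc
        exact hLfgt c (u+1) (by omega) (by omega) hcc
      · rw [he] at h1
        have hub : Y c < R * Y (u+1) := by
          by_contra hcc
          push_neg at hcc
          exact hSfgt c (u+1) (by omega) (by omega) hcc
        nlinarith [hYpos (u+1)]
    obtain ⟨Nu, hNu⟩ := hbig (S ^ 3 * Y (u + 1))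
    have hcNu : ∀ c, σf c = u → u < c → c < Nu := by
      intro c h1 h2
      by_contra hge
      push_neg at hge
      have := hNu c hge
      have := hcb c h1 h2
      linarith
    have hFn : ∀ c : ℕ, ∃ Nc : ℕ,
        σf c = u → u < c → ∀ v, Nc ≤ v → ∀ n, σf^[n] v ≠ c := by
      intro c
      by_cases hc : σf c = u ∧ u < c
      · have h3 := hcon c hc.1 hc.2
        simp only [hPd] at h3
        push_neg at h3
        obtain ⟨N, hN⟩ := h3
        exact ⟨N, fun _ _ v hv n => hN v hv n⟩
      · exact ⟨0, fun h1 h2 => absurd ⟨h1, h2⟩ hc⟩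
    choose F hF using hFn
    set Nmax := (Finset.range Nu).sup F with hNm
    obtain ⟨v, hv1, n, hn⟩ := hu (max (Nmax + 1) (u + 1))
    have hvu : u < v := by
      have := le_max_right (Nmax+1) (u+1)
      omega
    have hex : ∃ m, σf^[m] v = u := ⟨n, hn⟩
    have hn0 : σf^[Nat.find hex] v = u := Nat.find_spec hex
    have hn0pos : Nat.find hex ≠ 0 := by
      intro h
      rw [h] at hn0
      simp only [Function.iterate_zero, id_eq] at hn0
      omega
    have hc1 : σf (σf^[Nat.find hex - 1] v) = u := by
      have h7 : σf^[(Nat.find hex - 1) + 1] v = u := by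
        have he8 : Nat.find hex - 1 + 1 = Nat.find hex := by omega
        rw [he8]
        exact hn0
      rwa [Function.iterate_succ_apply'] at h7
    have hcne : σf^[Nat.find hex - 1] v ≠ u := by
      intro h
      exact Nat.find_min hex (m := Nat.find hex - 1) (by omega) h
    have hcu : u < σf^[Nat.find hex - 1] v := by
      rcases Nat.eq_zero_or_pos (σf^[Nat.find hex - 1] v) with h | h
      · rw [h] at hc1
        rw [hσ0] at hc1
        omega
      · have := hσlt _ h
        omega
    have hclt : σf^[Nat.find hex - 1] v < Nu := hcNu _ hc1 hcu
    have hFc : F (σf^[Nat.find hex - 1] v) ≤ Nmax :=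
      Finset.le_sup (Finset.mem_range.mpr hclt)
    exact hF _ hc1 hcu v (by omega) (Nat.find hex - 1) rfl
  -- build the infinite forward chain
  have hstep : ∀ u, ∃ c, Pers u → (σf c = u ∧ u < c ∧ Pers c) := by
    intro u
    by_cases h : Pers u
    · obtain ⟨c, hc⟩ := hchild u h
      exact ⟨c, fun _ => hc⟩
    · exact ⟨0, fun h' => absurd h' h⟩
  choose g hg using hstep
  set ψ : ℕ → ℕ := fun n => g^[n] 0 with hψd
  have hψPers : ∀ n, Pers (ψ n) := by
    intro n
    induction n with
    | zero => exact hPers0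
    | succ n ih =>
      have he : ψ (n+1) = g (ψ n) := by
        simp only [hψd, Function.iterate_succ_apply']
      rw [he]
      exact (hg (ψ n) ih).2.2
  have hψsucc : ∀ n, σf (ψ (n+1)) = ψ n ∧ ψ n < ψ (n+1) := by
    intro n
    have he : ψ (n+1) = g (ψ n) := by simp only [hψd, Function.iterate_succ_apply']
    rw [he]
    exact ⟨(hg (ψ n) (hψPers n)).1, (hg (ψ n) (hψPers n)).2.1⟩
  have hψmono : StrictMono ψ := strictMono_nat_of_lt_succ (fun n => (hψsucc n).2)
  have hψpos : ∀ n, 1 ≤ ψ (n + 1) := by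
    intro n
    have := (hψsucc n).2
    omega
  -- the two chain conditions
  have hedge : ∀ n, R * Y (ψ (n+1)) ≤ Y (ψ (n+2)) ∧ M (ψ (n+1)) * Y (ψ (n+2)) ≤ R := by
    intro n
    have h1 := (hψsucc (n+1)).1
    have h2 : 1 ≤ σf (ψ (n+2)) := by rw [h1]; exact hψpos n
    have h3 := hvalid (ψ (n+2)) h2
    rw [h1] at h3
    exact ⟨h3.1, h3.2.1⟩
  -- iterated growth along the chain
  have hRpow : ∀ j m, R ^ m * Y (ψ (j+1)) ≤ Y (ψ (j+1+m)) := by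
    intro j m
    induction m with
    | zero => simp
    | succ m ih =>
      have h1 := (hedge (j + m)).1
      have e1 : ψ (j + m + 1) = ψ (j + 1 + m) := by congr 1; omega
      have e2 : ψ (j + m + 2) = ψ (j + 1 + (m + 1)) := by congr 1; omega
      rw [e1, e2] at h1
      have h2 : R * (R ^ m * Y (ψ (j+1))) ≤ R * Y (ψ (j+1+m)) :=
        mul_le_mul_of_nonneg_left ih (le_of_lt hR0)
      calc R ^ (m+1) * Y (ψ (j+1)) = R * (R ^ m * Y (ψ (j+1))) := by ring
        _ ≤ R * Y (ψ (j+1+m)) := h2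
        _ ≤ Y (ψ (j+1+(m+1))) := h1
  -- the bad-index finsets
  set Bf : ℕ → Finset ℕ :=
    fun n => (Finset.Icc 1 n).filter (fun i => R / S ^ 3 < M i * Y (i + 1)) with hBfd
  obtain ⟨K, hK⟩ : ∃ K : ℕ, S ^ 3 ≤ R ^ K := by
    obtain ⟨n, hn⟩ := pow_unbounded_of_one_lt (S ^ 3) hR
    exact ⟨n, hn.le⟩
  -- count of long steps
  set Cg : ℕ → ℕ :=
    fun k => ((Finset.Icc 1 k).filter (fun j => S ^ 3 * Y (ψ j) ≤ Y (ψ (j+1)))).card with hCgd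
  have hIccsucc : ∀ k : ℕ, Finset.Icc 1 (k+1) = insert (k+1) (Finset.Icc 1 k) := by
    intro k
    ext x
    simp only [Finset.mem_Icc, Finset.mem_insert]
    omega
  have hnotmem : ∀ k : ℕ, (k+1) ∉ Finset.Icc 1 k := by
    intro k
    simp only [Finset.mem_Icc]
    omega
  have hLgprod : ∀ k, (S ^ 3) ^ (Cg k) * Y (ψ 1) ≤ Y (ψ (k+1)) := by
    intro k
    induction k with
    | zero =>
      have h0 : Cg 0 = 0 := by
        simp only [hCgd]
        rw [Finset.Icc_eq_empty (by omega)]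
        simp
      rw [h0]
      simp
    | succ k ih =>
      have hY2 : Y (ψ (k+1)) ≤ Y (ψ (k+2)) := hYmono.monotone (hψmono.monotone (by omega))
      by_cases hl : S ^ 3 * Y (ψ (k+1)) ≤ Y (ψ (k+2))
      · have hcard : Cg (k+1) = Cg k + 1 := by
          simp only [hCgd, hIccsucc k, Finset.filter_insert, if_pos hl]
          rw [Finset.card_insert_of_notMem (by
            intro hmem
            exact hnotmem k (Finset.mem_filter.mp hmem).1)]
        rw [hcard]
        calc (S^3) ^ (Cg k + 1) * Y (ψ 1) = S^3 * ((S^3) ^ (Cg k) * Y (ψ 1)) := by ring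
          _ ≤ S^3 * Y (ψ (k+1)) := by nlinarith
          _ ≤ Y (ψ (k+2)) := hl
      · have hcard : Cg (k+1) = Cg k := by
          simp only [hCgd, hIccsucc k, Finset.filter_insert, if_neg hl]
        rw [hcard]
        exact le_trans ih hY2
  -- the main counting inequality
  have hcount : ∀ k : ℕ, k ≤ Cg k + K + K * (Bf (ψ (k+1))).card := by
    intro k
    have hsplit :
        ((Finset.Icc 1 k).filter (fun j => S ^ 3 * Y (ψ j) ≤ Y (ψ (j+1)))).card +
        ((Finset.Icc 1 k).filter (fun j => ¬ S ^ 3 * Y (ψ j) ≤ Y (ψ (j+1)))).card = k := by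
      rw [Finset.card_filter_add_card_filter_not]
      simp [Nat.card_Icc]
    set Sh := (Finset.Icc 1 k).filter (fun j => ¬ S ^ 3 * Y (ψ j) ≤ Y (ψ (j+1))) with hShd
    -- facts about short edges
    have hShbr : ∀ j ∈ Sh,
        ¬(0 < Lf (ψ (j+1)) ∧ M (Lf (ψ (j+1))) * Y (Lf (ψ (j+1)) + 1) ≤ R / S ^ 3) := by
      intro j hj hbr
      have hnl : ¬ S ^ 3 * Y (ψ j) ≤ Y (ψ (j+1)) := (Finset.mem_filter.mp hj).2
      rcases hσcases (ψ (j+1)) with ⟨he, _, _⟩ | ⟨_, hbr2⟩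
      · have h1 : ψ j = Lf (ψ (j+1)) := by rw [← (hψsucc j).1, he]
        have h2 := (hLfspec (ψ (j+1)) (by omega)).2
        rw [← h1] at h2
        exact hnl h2
      · exact hbr2 hbr
    set A := Sh.filter (fun j => Lf (ψ (j+1)) = 0) with hAd
    set B := Sh.filter (fun j => ¬ Lf (ψ (j+1)) = 0) with hBd
    have hsplit2 : A.card + B.card = Sh.card :=
      Finset.card_filter_add_card_filter_not _
    -- A-steps: bounded by K
    have hAsub : A ⊆ Finset.Icc 1 K := by
      intro j hj
      have hjS : j ∈ Sh := (Finset.mem_filter.mp hj).1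
      have hj0 : Lf (ψ (j+1)) = 0 := (Finset.mem_filter.mp hj).2
      have hjE : 1 ≤ j ∧ j ≤ k := Finset.mem_Icc.mp ((Finset.mem_filter.mp hjS).1)
      have hYb : Y (ψ (j+1)) < S ^ 3 * Y 1 := by
        by_contra hcc
        push_neg at hcc
        exact hLfgt (ψ (j+1)) 1 (by omega) (by omega) hcc
      have hg1 : R ^ (j-1) * Y (ψ 1) ≤ Y (ψ (1 + (j-1))) := hRpow 0 (j-1)
      have hix : (1:ℕ) + (j - 1) = j := by omega
      rw [hix] at hg1
      have hY1 : Y 1 ≤ Y (ψ 1) := hYmono.monotone (hψpos 0)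
      have hYj : Y (ψ j) ≤ Y (ψ (j+1)) := hYmono.monotone (hψmono.monotone (by omega))
      have h5 : R ^ (j-1) * Y 1 < S ^ 3 * Y 1 := by
        have hp := pow_pos hR0 (j-1)
        nlinarith
      have h6 : R ^ (j-1) < S ^ 3 := by
        have hY1p := hYpos 1
        exact lt_of_mul_lt_mul_right h5 hY1p.le
      have h7 : j - 1 < K := by
        by_contra hcc
        push_neg at hcc
        have h8 := pow_le_pow_right₀ hR.le hcc
        linarith
      exact Finset.mem_Icc.mpr ⟨hjE.1, by omega⟩
    have hAcard : A.card ≤ K := by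
      have h9 := Finset.card_le_card hAsub
      simpa [Nat.card_Icc] using h9
    -- B-steps: map to bad indices with multiplicity ≤ K
    have hBfact : ∀ j ∈ B, 1 ≤ Lf (ψ (j+1)) ∧
        R / S ^ 3 < M (Lf (ψ (j+1))) * Y (Lf (ψ (j+1)) + 1) ∧
        S ^ 3 * Y (Lf (ψ (j+1))) ≤ Y (ψ (j+1)) ∧
        Y (ψ (j+1)) < S ^ 3 * Y (Lf (ψ (j+1)) + 1) ∧
        Lf (ψ (j+1)) + 1 ≤ ψ (j+1) := by
      intro j hj
      have hjS : j ∈ Sh := (Finset.mem_filter.mp hj).1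
      have hj0 : ¬ Lf (ψ (j+1)) = 0 := (Finset.mem_filter.mp hj).2
      obtain ⟨hq1, hq2⟩ := hLfspec (ψ (j+1)) hj0
      have hbr := hShbr j hjS
      have hnotgood : ¬ M (Lf (ψ (j+1))) * Y (Lf (ψ (j+1)) + 1) ≤ R / S ^ 3 := by
        intro hgd
        exact hbr ⟨by omega, hgd⟩
      have hup : Y (ψ (j+1)) < S ^ 3 * Y (Lf (ψ (j+1)) + 1) := by
        by_contra hcc
        push_neg at hcc
        exact hLfgt (ψ (j+1)) (Lf (ψ (j+1)) + 1) (by omega) (by omega) hcc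
      have hlt : Lf (ψ (j+1)) < ψ (j+1) := by
        have h10 : Y (Lf (ψ (j+1))) < Y (ψ (j+1)) := by
          nlinarith [hYpos (Lf (ψ (j+1)))]
        exact hYmono.lt_iff_lt.mp h10
      exact ⟨hq1, lt_of_not_ge hnotgood, hq2, hup, by omega⟩
    have hQmaps : ∀ j ∈ B, Lf (ψ (j+1)) ∈ Bf (ψ (k+1)) := by
      intro j hj
      obtain ⟨h1, h2, h3, h4, h5⟩ := hBfact j hj
      have hjS : j ∈ Sh := (Finset.mem_filter.mp hj).1
      have hjE : 1 ≤ j ∧ j ≤ k := Finset.mem_Icc.mp ((Finset.mem_filter.mp hjS).1)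
      have hle : ψ (j+1) ≤ ψ (k+1) := hψmono.monotone (by omega)
      simp only [hBfd, Finset.mem_filter, Finset.mem_Icc]
      exact ⟨⟨h1, by omega⟩, h2⟩
    have hmult : ∀ q ∈ Bf (ψ (k+1)),
        (B.filter (fun j => Lf (ψ (j+1)) = q)).card ≤ K := by
      intro q hq
      by_contra hgt
      push_neg at hgt
      set F := B.filter (fun j => Lf (ψ (j+1)) = q) with hFd
      have hFne : F.Nonempty := Finset.card_pos.mp (by omega)
      have hj1F : F.min' hFne ∈ F := F.min'_mem hFne
      have hj2F : F.max' hFne ∈ F := F.max'_mem hFne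
      set j1 := F.min' hFne
      set j2 := F.max' hFne
      have hj12 : j1 ≤ j2 := F.min'_le j2 hj2F
      have hFsub : F ⊆ Finset.Icc j1 j2 := by
        intro x hx
        exact Finset.mem_Icc.mpr ⟨F.min'_le x hx, F.le_max' x hx⟩
      have hcardF : F.card ≤ j2 + 1 - j1 := by
        have h11 := Finset.card_le_card hFsub
        simpa [Nat.card_Icc] using h11
      have hKle : K ≤ j2 - j1 := by omega
      obtain ⟨f1a, _, f1c, _, f1e⟩ := hBfact j1 (Finset.mem_filter.mp hj1F).1
      obtain ⟨_, _, _, f2d, _⟩ := hBfact j2 (Finset.mem_filter.mp hj2F).1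
      have hq1 : Lf (ψ (j1+1)) = q := (Finset.mem_filter.mp hj1F).2
      have hq2 : Lf (ψ (j2+1)) = q := (Finset.mem_filter.mp hj2F).2
      rw [hq1] at f1c f1e
      rw [hq2] at f2d
      have hgrow2 : R ^ (j2 - j1) * Y (ψ (j1+1)) ≤ Y (ψ (j1+1+(j2-j1))) := hRpow j1 (j2-j1)
      have hix : j1 + 1 + (j2 - j1) = j2 + 1 := by omega
      rw [hix] at hgrow2
      have hYq : Y (q+1) ≤ Y (ψ (j1+1)) := hYmono.monotone f1e
      have hp1 : S ^ 3 * Y (q+1) ≤ R ^ K * Y (q+1) := by nlinarith [hYpos (q+1)]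
      have hp2 : R ^ K * Y (q+1) ≤ R ^ (j2-j1) * Y (q+1) := by
        have h12 := pow_le_pow_right₀ hR.le hKle
        nlinarith [hYpos (q+1)]
      have hp3 : R ^ (j2-j1) * Y (q+1) ≤ R ^ (j2-j1) * Y (ψ (j1+1)) := by
        nlinarith [pow_pos hR0 (j2-j1)]
      linarith
    have hBcard : B.card ≤ K * (Bf (ψ (k+1))).card :=
      Finset.card_le_mul_card_image_of_maps_to hQmaps K hmult
    have hCgeq : Cg k = ((Finset.Icc 1 k).filter (fun j => S ^ 3 * Y (ψ j) ≤ Y (ψ (j+1)))).card := by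
      simp only [hCgd]
    omega
  -- pass to the reals
  have hNcard : ∀ n : ℕ,
      ({i : ℕ | 1 ≤ i ∧ i ≤ n ∧ R / S ^ 3 < M i * Y (i + 1)}.ncard : ℝ) = ((Bf n).card : ℝ) := by
    intro n
    have hset : {i : ℕ | 1 ≤ i ∧ i ≤ n ∧ R / S ^ 3 < M i * Y (i + 1)} = ↑(Bf n) := by
      ext i
      simp only [hBfd, Set.mem_setOf_eq, Finset.coe_filter, Finset.mem_Icc]
      tauto
    rw [hset, Set.ncard_coe_finset]
  have hCgreal : ∀ k, (Cg k : ℝ) * (3 * Real.log S) ≤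
      Real.log (Y (ψ (k+1))) - Real.log (Y (ψ 1)) := by
    intro k
    have h1 := hLgprod k
    have h2 : Real.log ((S ^ 3) ^ Cg k * Y (ψ 1)) ≤ Real.log (Y (ψ (k+1))) :=
      Real.log_le_log (mul_pos (pow_pos hS3pos _) (hYpos _)) h1
    rw [Real.log_mul (ne_of_gt (pow_pos hS3pos _)) (hYpos _).ne'] at h2
    rw [Real.log_pow, Real.log_pow] at h2
    push_cast at h2
    linarith
  -- final assembly
  refine ⟨fun i => ψ (i+1), ?_, ?_, ?_, ?_, ?_⟩
  · intro a b hab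
    exact hψmono (by omega)
  · intro i
    exact hψpos i
  · intro i
    exact (hedge i).1
  · intro i
    exact (hedge i).2
  · -- limsup bound
    have hφts : Tendsto (fun i : ℕ => ψ (i+1)) atTop atTop := by
      apply tendsto_atTop_mono (fun i : ℕ => le_of_lt (Nat.lt_of_lt_of_le (Nat.lt_succ_self i) (hψmono.id_le (i+1))))
      exact tendsto_id
    have hYφ : Tendsto (fun k : ℕ => Y (ψ (k+1))) atTop atTop := hYtend.comp hφts
    have hlogφ : Tendsto (fun k : ℕ => Real.log (Y (ψ (k+1)))) atTop atTop :=
      Real.tendsto_log_atTop.comp hYφ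
    have hNφ : Tendsto (fun k : ℕ =>
        (({i : ℕ | 1 ≤ i ∧ i ≤ ψ (k+1) ∧ R / S ^ 3 < M i * Y (i + 1)}.ncard : ℝ)
          / Real.log (Y (ψ (k+1))))) atTop (𝓝 0) := by
      have h13 := hdensity.comp hφts
      simpa [Function.comp_def] using h13
    have hev : ∀ᶠ k : ℕ in atTop,
        (k:ℝ) / Real.log (Y (ψ (k+1))) ≤ 1 / Real.log S := by
      have e1 : ∀ᶠ k : ℕ in atTop, (1:ℝ) ≤ Real.log (Y (ψ (k+1))) :=
        hlogφ.eventually_ge_atTop 1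
      have e2 : ∀ᶠ k : ℕ in atTop,
          ((K:ℝ) * (3 * Real.log S) + |Real.log (Y (ψ 1))|) / Real.log (Y (ψ (k+1))) < 1 := by
        apply Tendsto.eventually_lt_const one_pos
        exact Tendsto.div_atTop tendsto_const_nhds hlogφ
      have e3 : ∀ᶠ k : ℕ in atTop,
          (K:ℝ) * (3 * Real.log S) *
            (({i : ℕ | 1 ≤ i ∧ i ≤ ψ (k+1) ∧ R / S ^ 3 < M i * Y (i + 1)}.ncard : ℝ)
              / Real.log (Y (ψ (k+1)))) < 1 := by
        apply Tendsto.eventually_lt_const one_pos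
        have h14 := hNφ.const_mul ((K:ℝ) * (3 * Real.log S))
        simpa using h14
      filter_upwards [e1, e2, e3] with k h1 h2 h3
      have hapos : (0:ℝ) < Real.log (Y (ψ (k+1))) := by linarith
      set a := Real.log (Y (ψ (k+1))) with had
      set c1 := Real.log (Y (ψ 1)) with hc1d
      set Nb := (({i : ℕ | 1 ≤ i ∧ i ≤ ψ (k+1) ∧ R / S ^ 3 < M i * Y (i + 1)}.ncard : ℝ)) with hNbd
      -- convert e2 : K*(3logS) + |c1| < a
      have h2' : (K:ℝ) * (3 * Real.log S) + |c1| < a := by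
        have := (div_lt_one hapos).mp h2
        linarith
      -- convert e3 : K*(3logS)*Nb < a
      have h3' : (K:ℝ) * (3 * Real.log S) * Nb < a := by
        have h15 : (K:ℝ) * (3 * Real.log S) * (Nb / a) < 1 := h3
        rw [mul_div_assoc'] at h15
        have := (div_lt_one hapos).mp h15
        linarith
      -- the counting inequality, real form
      have hcr : (k:ℝ) ≤ (Cg k : ℝ) + (K:ℝ) + (K:ℝ) * ((Bf (ψ (k+1))).card : ℝ) := by
        have h16 := hcount k
        exact_mod_cast h16
      have hcg := hCgreal k
      have hnb : ((Bf (ψ (k+1))).card : ℝ) = Nb := (hNcard (ψ (k+1))).symm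
      rw [hnb] at hcr
      -- combine : k * (3 log S) ≤ 3 a  hence k * log S ≤ a
      have hs3 : (0:ℝ) < 3 * Real.log S := by linarith
      have hkey : (k:ℝ) * (3 * Real.log S) ≤
          (Cg k : ℝ) * (3 * Real.log S) + (K:ℝ) * (3 * Real.log S) +
            (K:ℝ) * (3 * Real.log S) * Nb := by
        have h17 : (0:ℝ) ≤ Nb := by
          rw [hNbd]
          positivity
        nlinarith
      have habs : -c1 ≤ |c1| := by
        have := neg_abs_le c1
        linarith [le_abs_self c1]
      have h18 : (k:ℝ) * (3 * Real.log S) ≤ 3 * a := by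
        have h19 := hcg
        nlinarith
      have h20 : (k:ℝ) * Real.log S ≤ a := by nlinarith
      rw [div_le_div_iff₀ hapos hlogS]
      linarith
    apply Filter.limsup_le_of_le _ hev
    · -- coboundedness
      apply Filter.isCoboundedUnder_le_of_eventually_le atTop (x := 0)
      filter_upwards [hlogφ.eventually_ge_atTop 1] with k h1
      positivity
end
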